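/- arXiv:1212.4447 — 2 statements merged into one kernel-verified Lean document; each statement's English description precedes it below -/
import Mathlib

section
/- Let n ∈ ℕ and k ∈ {1, 2, ..., n−1}. For the simple symmetric random walk started at k, the restricted expectation of the hitting time of n on the event that n is reached before 0 equals E^k[τ_n 1_{τ_n < τ_0}] = k(n−k)(n+k)/(3n). -/
open MeasureTheory ProbabilityTheory Filter Set

noncomputable section

open Classical in
/-- Indicator (as a real number) of a proposition. -/
def ind (P : Prop) : ℝ := if P then 1 else 0

/-- Position after `k` steps of the ±1 nearest-neighbour walk started at `x`,
with steps given by `s` (`true` = step `+1`, `false` = step `-1`). -/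
def walkPos {n : ℕ} (x : ℤ) (s : Fin n → Bool) (k : ℕ) : ℤ :=
  x + ∑ i ∈ Finset.range k, (if h : i < n then (if s ⟨i, h⟩ then (1 : ℤ) else -1) else 0)

/-- `E^x [ φ(τ_z, path up to τ_z) ; τ_z < ∞ ]` for the simple symmetric random walk
started at `x`: the sum over all finite paths whose *first* visit to `z` (at a
positive time) occurs at their last step, a path of length `n` carrying
probability `(1/2)^n`. -/
def hitSum (x z : ℤ) (φ : (n : ℕ) → (Fin n → Bool) → ℝ) : ℝ :=
  ∑' n : ℕ, (2 : ℝ)⁻¹ ^ n * ∑ s : Fin n → Bool,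
    ind (0 < n ∧ walkPos x s n = z ∧ ∀ k, 0 < k → k < n → walkPos x s k ≠ z) * φ n s

/-- The killed-walk weight `exp(-∑_{m=0}^{n-1} V(S_m))` along a path of length `n`
started at `x`. -/
def wt (V : ℤ → ℝ) (x : ℤ) {n : ℕ} (s : Fin n → Bool) : ℝ :=
  Real.exp (- ∑ m ∈ Finset.range n, V (walkPos x s m))

namespace SRW

def eps (b : Bool) : ℤ := if b then 1 else -1

lemma eps_abs (b : Bool) : eps b = 1 ∨ eps b = -1 := by
  cases b <;> simp [eps]

lemma ind_nonneg (P : Prop) : 0 ≤ ind P := by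
  classical by_cases h : P <;> simp [ind, h]

lemma ind_le_one (P : Prop) : ind P ≤ 1 := by
  classical by_cases h : P <;> simp [ind, h]

lemma ind_of {P : Prop} (h : P) : ind P = 1 := by simp [ind, h]

lemma ind_of_not {P : Prop} (h : ¬ P) : ind P = 0 := by simp [ind, h]

lemma ind_congr {P Q : Prop} (h : P ↔ Q) : ind P = ind Q := by
  classical by_cases hp : P
  · rw [ind_of hp, ind_of (h.mp hp)]
  · rw [ind_of_not hp, ind_of_not (fun hq => hp (h.mpr hq))]

lemma ind_mul_ind (P Q : Prop) : ind P * ind Q = ind (P ∧ Q) := by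
  classical by_cases hp : P <;> by_cases hq : Q <;> simp [ind, hp, hq]

lemma ind_le_ind {P Q : Prop} (h : P → Q) : ind P ≤ ind Q := by
  classical by_cases hp : P
  · rw [ind_of hp, ind_of (h hp)]
  · rw [ind_of_not hp]; exact ind_nonneg Q

lemma walk_zero {m : ℕ} (x : ℤ) (s : Fin m → Bool) : walkPos x s 0 = x := by
  simp [walkPos]

lemma walk_succ_eq {m : ℕ} (x : ℤ) (s : Fin m → Bool) (j : ℕ) :
    walkPos x s (j + 1) = walkPos x s j + (if h : j < m then eps (s ⟨j, h⟩) else 0) := by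
  simp only [walkPos, Finset.sum_range_succ, eps]
  ring

lemma walk_tail {m : ℕ} (x : ℤ) (s : Fin (m + 1) → Bool) (j : ℕ) :
    walkPos x s (j + 1) = walkPos (x + eps (s 0)) (Fin.tail s) j := by
  simp only [walkPos, Finset.sum_range_succ' (fun i => if h : i < m + 1 then (if s ⟨i, h⟩ then (1:ℤ) else -1) else 0) j]
  have h0 : (if h : (0:ℕ) < m + 1 then (if s ⟨0, h⟩ then (1:ℤ) else -1) else 0) = eps (s 0) := by
    simp [eps]; rfl
  rw [h0]
  have : ∀ i, (if h : i + 1 < m + 1 then (if s ⟨i+1, h⟩ then (1:ℤ) else -1) else 0)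
      = (if h : i < m then (if Fin.tail s ⟨i, h⟩ then (1:ℤ) else -1) else 0) := by
    intro i
    by_cases h : i < m
    · rw [dif_pos (by omega : i + 1 < m + 1), dif_pos h]
      rfl
    · rw [dif_neg (by omega), dif_neg h]
  simp only [this]
  ring

variable (N : ℕ)

def Strip (y : ℤ) : Prop := 0 < y ∧ y < (N : ℤ)

def Agood {m : ℕ} (x : ℤ) (s : Fin m → Bool) : Prop :=
  walkPos x s m = (N : ℤ) ∧ ∀ j, 0 < j → j < m → (walkPos x s j ≠ (N : ℤ) ∧ walkPos x s j ≠ 0)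

def Bgood {m : ℕ} (x : ℤ) (s : Fin m → Bool) : Prop :=
  walkPos x s m = (N : ℤ) ∧ ∀ j, j < m → (walkPos x s j ≠ (N : ℤ) ∧ walkPos x s j ≠ 0)

def Sgood {m : ℕ} (x : ℤ) (s : Fin m → Bool) : Prop :=
  ∀ j, j < m → Strip N (walkPos x s j)

def Acard (x : ℤ) (m : ℕ) : ℝ := ∑ s : Fin m → Bool, ind (Agood N x s)
def Bcard (x : ℤ) (m : ℕ) : ℝ := ∑ s : Fin m → Bool, ind (Bgood N x s)
def Scard (x : ℤ) (m : ℕ) : ℝ := ∑ s : Fin m → Bool, ind (Sgood N x s)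

lemma sum_cons (p : ℕ) (F : (Fin (p + 1) → Bool) → ℝ) :
    ∑ s : Fin (p + 1) → Bool, F s = ∑ b : Bool, ∑ t : Fin p → Bool, F (Fin.cons b t) := by
  rw [← Equiv.sum_comp (Fin.consEquiv (fun _ : Fin (p+1) => Bool)) F, Fintype.sum_prod_type]
  rfl

variable {N}

lemma Agood_cons {m : ℕ} (x : ℤ) (b : Bool) (t : Fin m → Bool) :
    Agood N x (Fin.cons b t) ↔ Bgood N (x + eps b) t := by
  have hw : ∀ j : ℕ, walkPos x (Fin.cons b t) (j + 1) = walkPos (x + eps b) t j := by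
    intro j
    rw [walk_tail]
    simp [Fin.tail_cons]
  constructor
  · rintro ⟨h1, h2⟩
    refine ⟨by rw [← hw]; exact h1, fun j hj => ?_⟩
    rw [← hw]
    exact h2 (j + 1) (Nat.succ_pos j) (by omega)
  · rintro ⟨h1, h2⟩
    refine ⟨by rw [hw]; exact h1, fun j hj hjm => ?_⟩
    obtain ⟨j', rfl⟩ : ∃ j', j = j' + 1 := ⟨j - 1, by omega⟩
    rw [hw]
    exact h2 j' (by omega)

lemma Bgood_cons {m : ℕ} (x : ℤ) (b : Bool) (t : Fin m → Bool) :
    Bgood N x (Fin.cons b t) ↔ ((x ≠ (N : ℤ) ∧ x ≠ 0) ∧ Bgood N (x + eps b) t) := by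
  have hw : ∀ j : ℕ, walkPos x (Fin.cons b t) (j + 1) = walkPos (x + eps b) t j := by
    intro j; rw [walk_tail]; simp [Fin.tail_cons]
  constructor
  · rintro ⟨h1, h2⟩
    refine ⟨by simpa [walk_zero] using h2 0 (Nat.succ_pos m), by rw [← hw]; exact h1, fun j hj => ?_⟩
    rw [← hw]; exact h2 (j + 1) (by omega)
  · rintro ⟨hx, h1, h2⟩
    refine ⟨by rw [hw]; exact h1, fun j hj => ?_⟩
    match j with
    | 0 => simpa [walk_zero] using hx
    | j' + 1 => rw [hw]; exact h2 j' (by omega)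

lemma Sgood_cons {m : ℕ} (x : ℤ) (b : Bool) (t : Fin m → Bool) :
    Sgood N x (Fin.cons b t) ↔ (Strip N x ∧ Sgood N (x + eps b) t) := by
  have hw : ∀ j : ℕ, walkPos x (Fin.cons b t) (j + 1) = walkPos (x + eps b) t j := by
    intro j; rw [walk_tail]; simp [Fin.tail_cons]
  constructor
  · rintro h
    refine ⟨by simpa [walk_zero] using h 0 (Nat.succ_pos m), fun j hj => ?_⟩
    rw [← hw]; exact h (j + 1) (by omega)
  · rintro ⟨hx, h⟩ j hj
    match j with
    | 0 => simpa [walk_zero] using hx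
    | j' + 1 => rw [hw]; exact h j' (by omega)

lemma Acard_succ (x : ℤ) (m : ℕ) :
    Acard N x (m + 1) = Bcard N (x + 1) m + Bcard N (x - 1) m := by
  rw [Acard, sum_cons, Fintype.sum_bool]
  have h : ∀ b : Bool, (∑ t : Fin m → Bool, ind (Agood N x (Fin.cons b t)))
      = Bcard N (x + eps b) m :=
    fun b => Finset.sum_congr rfl fun t _ => ind_congr (Agood_cons x b t)
  rw [h true, h false]
  simp [eps, sub_eq_add_neg]

lemma Scard_succ (x : ℤ) (m : ℕ) :
    Scard N x (m + 1) = ind (Strip N x) * (Scard N (x + 1) m + Scard N (x - 1) m) := by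
  rw [Scard, sum_cons, Fintype.sum_bool]
  have h : ∀ b : Bool, (∑ t : Fin m → Bool, ind (Sgood N x (Fin.cons b t)))
      = ind (Strip N x) * Scard N (x + eps b) m := by
    intro b
    rw [Scard, Finset.mul_sum]
    exact Finset.sum_congr rfl fun t _ => by
      rw [ind_mul_ind]; exact ind_congr (Sgood_cons x b t)
  have e1 : x + eps true = x + 1 := by simp [eps]
  have e2 : x + eps false = x - 1 := by simp [eps]; ring
  rw [h true, h false, e1, e2]
  ring

lemma Bcard_eq_Acard {x : ℤ} (hx : Strip N x) (m : ℕ) : Bcard N x m = Acard N x m := by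
  unfold Bcard Acard
  refine Finset.sum_congr rfl fun s _ => ind_congr ?_
  obtain ⟨hx1, hx2⟩ := hx
  constructor
  · rintro ⟨h1, h2⟩; exact ⟨h1, fun j _ hj => h2 j hj⟩
  · rintro ⟨h1, h2⟩
    refine ⟨h1, fun j hj => ?_⟩
    match j with
    | 0 => rw [walk_zero]; omega
    | j' + 1 => exact h2 (j' + 1) (Nat.succ_pos j') hj

lemma Bcard_top (m : ℕ) : Bcard N (N : ℤ) m = ind (m = 0) := by
  match m with
  | 0 =>
    rw [Bcard, Fintype.sum_unique, ind_of ⟨walk_zero _ _, fun j hj => by omega⟩, ind_of rfl]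
  | m' + 1 =>
    rw [ind_of_not (by omega), Bcard]
    refine Finset.sum_eq_zero fun s _ => ind_of_not ?_
    rintro ⟨h1, h2⟩
    exact (h2 0 (Nat.succ_pos m')).1 (walk_zero _ _)

lemma Bcard_bot (hN : 0 < N) (m : ℕ) : Bcard N 0 m = 0 := by
  match m with
  | 0 =>
    rw [Bcard, Fintype.sum_unique, ind_of_not]
    rintro ⟨h1, h2⟩
    rw [walk_zero] at h1
    omega
  | m' + 1 =>
    rw [Bcard]
    refine Finset.sum_eq_zero fun s _ => ind_of_not ?_
    rintro ⟨h1, h2⟩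
    exact (h2 0 (Nat.succ_pos m')).2 (walk_zero _ _)

lemma Bgood_sgood {m : ℕ} {x : ℤ} {s : Fin m → Bool} (hx : Strip N x)
    (h : Bgood N x s) : Sgood N x s := by
  intro j
  induction j with
  | zero => intro _; rwa [walk_zero]
  | succ j ih =>
    intro hj
    have hjm : j < m := by omega
    have h1 := ih hjm
    have h2 := h.2 (j + 1) hj
    have hw : walkPos x s (j + 1) = walkPos x s j + eps (s ⟨j, hjm⟩) := by
      rw [walk_succ_eq, dif_pos hjm]
    obtain ⟨a, b⟩ := h1
    rcases eps_abs (s ⟨j, hjm⟩) with he | he <;>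
      (rw [hw, he] at h2 ⊢; obtain ⟨c, d⟩ := h2; exact ⟨by omega, by omega⟩)

lemma Agood_sgood {m : ℕ} {x : ℤ} {s : Fin m → Bool} (hx : Strip N x)
    (h : Agood N x s) : Sgood N x s := by
  intro j
  induction j with
  | zero => intro _; rwa [walk_zero]
  | succ j ih =>
    intro hj
    have hjm : j < m := by omega
    have h1 := ih hjm
    have h2 := h.2 (j + 1) (Nat.succ_pos j) hj
    have hw : walkPos x s (j + 1) = walkPos x s j + eps (s ⟨j, hjm⟩) := by
      rw [walk_succ_eq, dif_pos hjm]
    obtain ⟨a, b⟩ := h1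
    rcases eps_abs (s ⟨j, hjm⟩) with he | he <;>
      (rw [hw, he] at h2 ⊢; obtain ⟨c, d⟩ := h2; exact ⟨by omega, by omega⟩)

lemma Acard_le_Scard {x : ℤ} (hx : Strip N x) (m : ℕ) : Acard N x m ≤ Scard N x m :=
  Finset.sum_le_sum fun _ _ => ind_le_ind (Agood_sgood hx)

lemma Bcard_le_Scard {x : ℤ} (hx : Strip N x) (m : ℕ) : Bcard N x m ≤ Scard N x m :=
  Finset.sum_le_sum fun _ _ => ind_le_ind (Bgood_sgood hx)

lemma Acard_nonneg (x : ℤ) (m : ℕ) : 0 ≤ Acard N x m :=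
  Finset.sum_nonneg fun _ _ => ind_nonneg _

lemma Bcard_nonneg (x : ℤ) (m : ℕ) : 0 ≤ Bcard N x m :=
  Finset.sum_nonneg fun _ _ => ind_nonneg _

lemma Scard_nonneg (x : ℤ) (m : ℕ) : 0 ≤ Scard N x m :=
  Finset.sum_nonneg fun _ _ => ind_nonneg _

lemma Scard_le_pow (x : ℤ) (m : ℕ) : Scard N x m ≤ 2 ^ m := by
  calc Scard N x m ≤ ∑ _s : Fin m → Bool, (1 : ℝ) :=
        Finset.sum_le_sum fun s _ => ind_le_one _
    _ = 2 ^ m := by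
        rw [Finset.sum_const, Finset.card_univ]
        simp

lemma Scard_split (p m : ℕ) : ∀ x : ℤ,
    Scard N x (p + m) = ∑ b : Fin p → Bool, ind (Sgood N x b) * Scard N (walkPos x b p) m := by
  induction p with
  | zero =>
    intro x
    rw [zero_add, Fintype.sum_unique, walk_zero,
      ind_of (show Sgood N x _ from fun j hj => absurd hj (by omega)), one_mul]
  | succ p ih =>
    intro x
    have hpm : p + 1 + m = (p + m) + 1 := by omega
    rw [hpm, Scard_succ, ih (x + 1), ih (x - 1),
      sum_cons p (fun b => ind (Sgood N x b) * Scard N (walkPos x b (p + 1)) m),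
      Fintype.sum_bool]
    have key : ∀ b : Bool,
        (∑ t : Fin p → Bool, ind (Sgood N x (Fin.cons b t)) * Scard N (walkPos x (Fin.cons b t) (p + 1)) m)
          = ind (Strip N x) *
            ∑ t : Fin p → Bool, ind (Sgood N (x + eps b) t) * Scard N (walkPos (x + eps b) t p) m := by
      intro b
      rw [Finset.mul_sum]
      refine Finset.sum_congr rfl fun t _ => ?_
      have hw : walkPos x (Fin.cons b t) (p + 1) = walkPos (x + eps b) t p := by
        rw [walk_tail]; simp [Fin.tail_cons]
      rw [hw, ind_congr (Sgood_cons x b t), ← ind_mul_ind, mul_assoc]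
    have e1 : x + eps true = x + 1 := by simp [eps]
    have e2 : x + eps false = x - 1 := by simp [eps]; ring
    rw [key true, key false, e1, e2]
    ring

lemma prefix_bound (hN : 0 < N) (x : ℤ) :
    ∑ b : Fin N → Bool, ind (Sgood N x b) ≤ 2 ^ N - 1 := by
  have hall : ¬ Sgood N x (fun _ : Fin N => true) := by
    intro h
    by_cases hx : 0 < x
    · have hw : ∀ j, j ≤ N → walkPos x (fun _ : Fin N => true) j = x + j := by
        intro j
        induction j with
        | zero => intro _; simp [walk_zero]
        | succ j ihj =>
          intro hjN
          rw [walk_succ_eq, dif_pos (show j < N by omega), ihj (by omega)]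
          simp [eps]
          push_cast
          ring
      have hj := h (N - 1) (by omega)
      rw [hw (N - 1) (by omega)] at hj
      obtain ⟨_, h2⟩ := hj
      omega
    · have hj := h 0 (by omega)
      rw [walk_zero] at hj
      exact absurd hj.1 (by omega)
  have hcard : (Fintype.card (Fin N → Bool)) = 2 ^ N := by simp
  calc ∑ b : Fin N → Bool, ind (Sgood N x b)
      = ∑ b ∈ Finset.univ.erase (fun _ : Fin N => true), ind (Sgood N x b) := by
        exact (Finset.sum_erase Finset.univ (f := fun b => ind (Sgood N x b))
          (ind_of_not hall)).symm
    _ ≤ ∑ _b ∈ Finset.univ.erase (fun _ : Fin N => true), (1 : ℝ) :=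
        Finset.sum_le_sum fun _ _ => ind_le_one _
    _ = ((Finset.univ.erase (fun _ : Fin N => true)).card : ℝ) := by
        rw [Finset.sum_const]; simp
    _ = 2 ^ N - 1 := by
        rw [Finset.card_erase_of_mem (Finset.mem_univ _), Finset.card_univ, hcard]
        have h1 : 1 ≤ 2 ^ N := Nat.one_le_two_pow
        push_cast [Nat.cast_sub h1]
        ring

lemma Scard_le (hN : 0 < N) : ∀ m : ℕ, ∀ x : ℤ,
    Scard N x m ≤ 2 ^ N * ((2 : ℝ) ^ N - 1) ^ (m / N) := by
  intro m
  induction m using Nat.strong_induction_on with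
  | _ m ih =>
    intro x
    have hpow1 : (0 : ℝ) ≤ (2 : ℝ) ^ N - 1 := by
      have : (1 : ℝ) ≤ 2 ^ N := one_le_pow₀ (by norm_num)
      linarith
    by_cases hm : m < N
    · have h1 : Scard N x m ≤ 2 ^ m := Scard_le_pow x m
      have h2 : (2 : ℝ) ^ m ≤ 2 ^ N := pow_le_pow_right₀ (by norm_num) (le_of_lt hm)
      rw [Nat.div_eq_of_lt hm, pow_zero, mul_one]
      linarith
    · push_neg at hm
      obtain ⟨m', rfl⟩ : ∃ m', m = N + m' := ⟨m - N, by omega⟩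
      rw [Scard_split]
      set C : ℝ := 2 ^ N * ((2 : ℝ) ^ N - 1) ^ (m' / N) with hC
      have hC0 : 0 ≤ C := by positivity
      calc (∑ b : Fin N → Bool, ind (Sgood N x b) * Scard N (walkPos x b N) m')
          ≤ ∑ b : Fin N → Bool, ind (Sgood N x b) * C :=
            Finset.sum_le_sum fun b _ =>
              mul_le_mul_of_nonneg_left (ih m' (by omega) _) (ind_nonneg _)
        _ = (∑ b : Fin N → Bool, ind (Sgood N x b)) * C := by rw [Finset.sum_mul]
        _ ≤ ((2 : ℝ) ^ N - 1) * C := mul_le_mul_of_nonneg_right (prefix_bound hN x) hC0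
        _ = 2 ^ N * ((2 : ℝ) ^ N - 1) ^ ((N + m') / N) := by
            have hd : (N + m') / N = m' / N + 1 := by
              rw [Nat.add_comm, Nat.add_div_right _ hN]
            rw [hd, hC]
            ring
lemma summable_master (hN : 0 < N) (x : ℤ) :
    Summable (fun m : ℕ => ((m : ℝ) + 1) * (2⁻¹ : ℝ) ^ m * Scard N x m) := by
  set θ : ℝ := 1 - (2 : ℝ)⁻¹ ^ N with hθ
  have hhalf : (0 : ℝ) < (2:ℝ)⁻¹ ^ N := by positivity
  have hhalf1 : (2 : ℝ)⁻¹ ^ N < 1 := pow_lt_one₀ (by norm_num) (by norm_num) hN.ne'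
  have hθ0 : 0 < θ := by simp only [hθ]; linarith
  have hθ1 : θ < 1 := by simp only [hθ]; linarith
  set ρ : ℝ := θ ^ ((N : ℝ)⁻¹) with hρ
  have hρ0 : 0 < ρ := Real.rpow_pos_of_pos hθ0 _
  have hρ1 : ρ < 1 := Real.rpow_lt_one hθ0.le hθ1 (by positivity)
  have hρN : ρ ^ N = θ := by
    rw [hρ, ← Real.rpow_natCast (θ ^ ((N : ℝ)⁻¹)) N, ← Real.rpow_mul hθ0.le,
      inv_mul_cancel₀ (by exact_mod_cast hN.ne' : (N : ℝ) ≠ 0), Real.rpow_one]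
  have h2 : ((2 : ℝ) ^ N - 1) = 2 ^ N * θ := by
    have : (2 : ℝ) ^ N * (2 : ℝ)⁻¹ ^ N = 1 := by
      rw [← mul_pow]; norm_num
    simp only [hθ]
    nlinarith
  have key : ∀ m, (2⁻¹ : ℝ) ^ m * Scard N x m ≤ (2 ^ N / ρ ^ N) * ρ ^ m := by
    intro m
    set q := m / N with hq
    have hqm : N * q ≤ m := by
      rw [hq, Nat.mul_comm]; exact Nat.div_mul_le_self m N
    have hmq : m ≤ N * q + N := by
      have h5 : N * q + m % N = m := by rw [hq]; exact Nat.div_add_mod m N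
      have h6 : m % N < N := Nat.mod_lt m hN
      omega
    calc (2⁻¹ : ℝ) ^ m * Scard N x m
        ≤ (2⁻¹ : ℝ) ^ m * (2 ^ N * (2 ^ N * θ) ^ q) := by
          apply mul_le_mul_of_nonneg_left _ (by positivity)
          rw [← h2]
          exact Scard_le hN m x
      _ = 2 ^ N * θ ^ q * ((2 : ℝ) ^ (N * q) * (2⁻¹ : ℝ) ^ m) := by
          rw [mul_pow, pow_mul]; ring
      _ ≤ 2 ^ N * θ ^ q * 1 := by
          apply mul_le_mul_of_nonneg_left _ (by positivity)
          have hle : (2 : ℝ) ^ (N * q) ≤ 2 ^ m := pow_le_pow_right₀ one_le_two hqm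
          have hone : (2 : ℝ) ^ m * (2⁻¹ : ℝ) ^ m = 1 := by rw [← mul_pow]; norm_num
          calc (2 : ℝ) ^ (N * q) * (2⁻¹ : ℝ) ^ m ≤ (2 : ℝ) ^ m * (2⁻¹ : ℝ) ^ m :=
                mul_le_mul_of_nonneg_right hle (by positivity)
            _ = 1 := hone
      _ ≤ 2 ^ N * (ρ ^ m / ρ ^ N) := by
          rw [mul_one]
          apply mul_le_mul_of_nonneg_left _ (by positivity)
          rw [le_div_iff₀ (pow_pos hρ0 N), ← hρN, ← pow_mul, ← pow_add]
          exact pow_le_pow_of_le_one hρ0.le hρ1.le hmq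
      _ = (2 ^ N / ρ ^ N) * ρ ^ m := by ring
  set C : ℝ := 2 ^ N / ρ ^ N with hC
  have hC0 : 0 ≤ C := by positivity
  apply Summable.of_nonneg_of_le
    (f := fun m : ℕ => C * ((m : ℝ) ^ 1 * ρ ^ m) + C * ρ ^ m)
    (fun m => mul_nonneg (mul_nonneg (by positivity) (by positivity)) (Scard_nonneg x m))
  · intro m
    have := key m
    have h7 : ((m : ℝ) + 1) * ((2⁻¹ : ℝ) ^ m * Scard N x m) ≤ ((m : ℝ) + 1) * (C * ρ ^ m) :=
      mul_le_mul_of_nonneg_left (key m) (by positivity)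
    calc ((m : ℝ) + 1) * (2⁻¹ : ℝ) ^ m * Scard N x m
        = ((m : ℝ) + 1) * ((2⁻¹ : ℝ) ^ m * Scard N x m) := by ring
      _ ≤ ((m : ℝ) + 1) * (C * ρ ^ m) := h7
      _ = C * ((m : ℝ) ^ 1 * ρ ^ m) + C * ρ ^ m := by ring
  · exact ((summable_pow_mul_geometric_of_norm_lt_one 1
      (by rwa [Real.norm_of_nonneg hρ0.le])).mul_left C).add
      ((summable_geometric_of_lt_one hρ0.le hρ1).mul_left C)

lemma summable_of_le_master (hN : 0 < N) (x : ℤ) {f : ℕ → ℝ} (h0 : ∀ m, 0 ≤ f m)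
    (hle : ∀ m, f m ≤ ((m : ℝ) + 1) * (2⁻¹ : ℝ) ^ m * Scard N x m) : Summable f :=
  (summable_master hN x).of_nonneg_of_le h0 hle

lemma summable_A_time (hN : 0 < N) {x : ℤ} (hx : Strip N x) :
    Summable (fun m : ℕ => (m : ℝ) * (2⁻¹ : ℝ) ^ m * Acard N x m) := by
  refine summable_of_le_master hN x
    (fun m => mul_nonneg (mul_nonneg (by positivity) (by positivity)) (Acard_nonneg x m))
    (fun m => ?_)
  have h1 : Acard N x m ≤ Scard N x m := Acard_le_Scard hx m
  have h2 : (m : ℝ) ≤ (m : ℝ) + 1 := by linarith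
  have h3 : (0:ℝ) ≤ (2⁻¹:ℝ)^m := by positivity
  exact mul_le_mul (mul_le_mul_of_nonneg_right h2 h3) h1 (Acard_nonneg (N := N) x m)
    (by positivity)

lemma summable_A_prob (hN : 0 < N) {x : ℤ} (hx : Strip N x) :
    Summable (fun m : ℕ => (2⁻¹ : ℝ) ^ m * Acard N x m) := by
  refine summable_of_le_master hN x
    (fun m => mul_nonneg (by positivity) (Acard_nonneg x m)) (fun m => ?_)
  have h1 : Acard N x m ≤ Scard N x m := Acard_le_Scard hx m
  have h3 : (0:ℝ) ≤ (2⁻¹:ℝ)^m := by positivity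
  have h2 : (2⁻¹:ℝ)^m ≤ ((m:ℝ) + 1) * (2⁻¹:ℝ)^m := by
    nlinarith [Nat.cast_nonneg (α := ℝ) m]
  exact mul_le_mul h2 h1 (Acard_nonneg (N := N) x m) (by positivity)

lemma summable_B_time (hN : 0 < N) {x : ℤ} (hx : Strip N x ∨ x = (N:ℤ) ∨ x = 0) :
    Summable (fun m : ℕ => ((m : ℝ) + 1) * (2⁻¹ : ℝ) ^ (m+1) * Bcard N x m) := by
  rcases hx with hx | hx | hx
  · refine summable_of_le_master hN x
      (fun m => mul_nonneg (mul_nonneg (by positivity) (by positivity)) (Bcard_nonneg x m))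
      (fun m => ?_)
    have h1 : Bcard N x m ≤ Scard N x m := Bcard_le_Scard hx m
    have h4 : (2⁻¹:ℝ)^(m+1) ≤ (2⁻¹:ℝ)^m := by
      rw [pow_succ]
      nlinarith [pow_pos (show (0:ℝ) < 2⁻¹ by norm_num) m]
    have h3 : (0:ℝ) ≤ (2⁻¹:ℝ)^m := by positivity
    have h5 : (0:ℝ) ≤ (2⁻¹:ℝ)^(m+1) := by positivity
    have h6 : (0:ℝ) ≤ (m:ℝ) + 1 := by positivity
    exact mul_le_mul (mul_le_mul_of_nonneg_left h4 h6) h1 (Bcard_nonneg (N := N) x m)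
      (by positivity)
  · subst hx
    apply summable_of_ne_finset_zero (s := {0})
    intro m hm
    have hm0 : m ≠ 0 := by simpa using hm
    rw [Bcard_top, ind_of_not hm0]
    ring
  · subst hx
    apply summable_of_ne_finset_zero (s := (∅ : Finset ℕ))
    intro m _
    rw [Bcard_bot hN]
    ring

lemma summable_B_prob (hN : 0 < N) {x : ℤ} (hx : Strip N x ∨ x = (N:ℤ) ∨ x = 0) :
    Summable (fun m : ℕ => (2⁻¹ : ℝ) ^ (m+1) * Bcard N x m) := by
  have h := summable_B_time hN hx
  refine h.of_nonneg_of_le (fun m => mul_nonneg (by positivity) (Bcard_nonneg x m)) (fun m => ?_)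
  have h5 : (0:ℝ) ≤ (2⁻¹:ℝ)^(m+1) := by positivity
  nlinarith [mul_nonneg (mul_nonneg (Nat.cast_nonneg (α := ℝ) m) h5) (Bcard_nonneg (N := N) x m)]
def Tv (M : ℕ) (x : ℤ) : ℝ := ∑' m : ℕ, (m : ℝ) * (2⁻¹ : ℝ) ^ m * Acard M x m
def Gv (M : ℕ) (x : ℤ) : ℝ := ∑' m : ℕ, (2⁻¹ : ℝ) ^ m * Acard M x m

open Classical in
def Gt (M : ℕ) (x : ℤ) : ℝ := if x = (M : ℤ) then 1 else if Strip M x then Gv M x else 0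

open Classical in
def Tt (M : ℕ) (x : ℤ) : ℝ := if Strip M x then Tv M x else 0

lemma Gt_strip {x : ℤ} (hx : Strip N x) : Gt N x = Gv N x := by
  rw [Gt, if_neg (by obtain ⟨a, b⟩ := hx; omega), if_pos hx]

lemma Tt_strip {x : ℤ} (hx : Strip N x) : Tt N x = Tv N x := if_pos hx

lemma Acard_zero {x : ℤ} (hx : x ≠ (N : ℤ)) : Acard N x 0 = 0 := by
  rw [Acard, Fintype.sum_unique, ind_of_not]
  rintro ⟨h1, _⟩
  rw [walk_zero] at h1
  exact hx h1

lemma JT_eq (hN : 0 < N) {y : ℤ} (hy : Strip N y ∨ y = (N : ℤ) ∨ y = 0) :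
    (∑' m : ℕ, ((m : ℝ) + 1) * (2⁻¹ : ℝ) ^ (m + 1) * Bcard N y m)
      = (Tt N y + Gt N y) / 2 := by
  rcases hy with hy | hy | hy
  · have hB : ∀ m, Bcard N y m = Acard N y m := Bcard_eq_Acard hy
    have hpt : ∀ m : ℕ, ((m : ℝ) + 1) * (2⁻¹ : ℝ) ^ (m + 1) * Bcard N y m
        = 2⁻¹ * ((m : ℝ) * (2⁻¹ : ℝ) ^ m * Acard N y m + (2⁻¹ : ℝ) ^ m * Acard N y m) := by
      intro m
      rw [hB m, pow_succ]
      ring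
    rw [tsum_congr hpt, tsum_mul_left,
      Summable.tsum_add (summable_A_time hN hy) (summable_A_prob hN hy)]
    rw [Tt_strip hy, Gt_strip hy, Tv, Gv]
    ring
  · subst hy
    have hpt : ∀ m : ℕ, ((m : ℝ) + 1) * (2⁻¹ : ℝ) ^ (m + 1) * Bcard N (N : ℤ) m
        = ((m : ℝ) + 1) * (2⁻¹ : ℝ) ^ (m + 1) * ind (m = 0) := by
      intro m; rw [Bcard_top]
    rw [tsum_congr hpt, tsum_eq_single 0 (fun m hm => by rw [ind_of_not hm]; ring)]
    rw [ind_of rfl, Tt, if_neg (fun h => by obtain ⟨a, b⟩ := h; omega), Gt, if_pos rfl]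
    norm_num
  · subst hy
    have hpt : ∀ m : ℕ, ((m : ℝ) + 1) * (2⁻¹ : ℝ) ^ (m + 1) * Bcard N 0 m = 0 := by
      intro m; rw [Bcard_bot hN]; ring
    rw [tsum_congr hpt, tsum_zero,
      Tt, if_neg (fun h => by obtain ⟨a, b⟩ := h; omega),
      Gt, if_neg (by intro h; omega), if_neg (fun h => by obtain ⟨a, b⟩ := h; omega)]
    norm_num

lemma JG_eq (hN : 0 < N) {y : ℤ} (hy : Strip N y ∨ y = (N : ℤ) ∨ y = 0) :
    (∑' m : ℕ, (2⁻¹ : ℝ) ^ (m + 1) * Bcard N y m) = Gt N y / 2 := by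
  rcases hy with hy | hy | hy
  · have hB : ∀ m, Bcard N y m = Acard N y m := Bcard_eq_Acard hy
    have hpt : ∀ m : ℕ, (2⁻¹ : ℝ) ^ (m + 1) * Bcard N y m
        = 2⁻¹ * ((2⁻¹ : ℝ) ^ m * Acard N y m) := by
      intro m; rw [hB m, pow_succ]; ring
    rw [tsum_congr hpt, tsum_mul_left, Gt_strip hy, Gv]
    ring
  · subst hy
    have hpt : ∀ m : ℕ, (2⁻¹ : ℝ) ^ (m + 1) * Bcard N (N : ℤ) m
        = (2⁻¹ : ℝ) ^ (m + 1) * ind (m = 0) := by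
      intro m; rw [Bcard_top]
    rw [tsum_congr hpt, tsum_eq_single 0 (fun m hm => by rw [ind_of_not hm]; ring)]
    rw [ind_of rfl, Gt, if_pos rfl]
    norm_num
  · subst hy
    have hpt : ∀ m : ℕ, (2⁻¹ : ℝ) ^ (m + 1) * Bcard N 0 m = 0 := by
      intro m; rw [Bcard_bot hN]; ring
    rw [tsum_congr hpt, tsum_zero,
      Gt, if_neg (by intro h; omega), if_neg (fun h => by obtain ⟨a, b⟩ := h; omega)]
    norm_num

lemma neighbor_cases {x : ℤ} (hx : Strip N x) :
    (Strip N (x + 1) ∨ x + 1 = (N : ℤ) ∨ x + 1 = 0) ∧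
      (Strip N (x - 1) ∨ x - 1 = (N : ℤ) ∨ x - 1 = 0) := by
  obtain ⟨a, b⟩ := hx
  constructor
  · by_cases h : x + 1 < (N : ℤ)
    · exact Or.inl ⟨by omega, h⟩
    · exact Or.inr (Or.inl (by omega))
  · by_cases h : 0 < x - 1
    · exact Or.inl ⟨h, by omega⟩
    · exact Or.inr (Or.inr (by omega))

lemma Tt_rec (hN : 0 < N) {x : ℤ} (hx : Strip N x) :
    Tt N x = (Tt N (x + 1) + Tt N (x - 1)) / 2
      + (Gt N (x + 1) + Gt N (x - 1)) / 2 := by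
  obtain ⟨hy1, hy2⟩ := neighbor_cases hx
  have hsum : Summable (fun m : ℕ => (m : ℝ) * (2⁻¹ : ℝ) ^ m * Acard N x m) :=
    summable_A_time hN hx
  rw [Tt_strip hx, Tv, Summable.tsum_eq_zero_add hsum]
  have h0 : ((0 : ℕ) : ℝ) * (2⁻¹ : ℝ) ^ (0 : ℕ) * Acard N x 0 = 0 := by norm_num
  rw [h0, zero_add]
  have hpt : ∀ m : ℕ, (((m + 1 : ℕ)) : ℝ) * (2⁻¹ : ℝ) ^ (m + 1) * Acard N x (m + 1)
      = ((m : ℝ) + 1) * (2⁻¹ : ℝ) ^ (m + 1) * Bcard N (x + 1) m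
        + ((m : ℝ) + 1) * (2⁻¹ : ℝ) ^ (m + 1) * Bcard N (x - 1) m := by
    intro m
    rw [Acard_succ]
    push_cast
    ring
  rw [tsum_congr hpt, Summable.tsum_add (summable_B_time hN hy1) (summable_B_time hN hy2),
    JT_eq hN hy1, JT_eq hN hy2]
  ring

lemma Gt_rec (hN : 0 < N) {x : ℤ} (hx : Strip N x) :
    Gt N x = (Gt N (x + 1) + Gt N (x - 1)) / 2 := by
  obtain ⟨hy1, hy2⟩ := neighbor_cases hx
  have hsum : Summable (fun m : ℕ => (2⁻¹ : ℝ) ^ m * Acard N x m) :=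
    summable_A_prob hN hx
  rw [Gt_strip hx, Gv, Summable.tsum_eq_zero_add hsum]
  have h0 : (2⁻¹ : ℝ) ^ (0 : ℕ) * Acard N x 0 = 0 := by
    rw [Acard_zero (by obtain ⟨a, b⟩ := hx; omega)]
    ring
  rw [h0, zero_add]
  have hpt : ∀ m : ℕ, (2⁻¹ : ℝ) ^ (m + 1) * Acard N x (m + 1)
      = (2⁻¹ : ℝ) ^ (m + 1) * Bcard N (x + 1) m
        + (2⁻¹ : ℝ) ^ (m + 1) * Bcard N (x - 1) m := by
    intro m
    rw [Acard_succ]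
    ring
  rw [tsum_congr hpt, Summable.tsum_add (summable_B_prob hN hy1) (summable_B_prob hN hy2),
    JG_eq hN hy1, JG_eq hN hy2]
  ring
lemma harm_zero (hN : 0 < N) (f : ℤ → ℝ) (h0 : f 0 = 0) (hNv : f (N : ℤ) = 0)
    (hrec : ∀ x : ℤ, 0 < x → x < (N : ℤ) → f x = (f (x + 1) + f (x - 1)) / 2) :
    ∀ j : ℕ, j ≤ N → f (j : ℤ) = 0 := by
  have key : ∀ j : ℕ, j + 1 ≤ N →
      f (j : ℤ) = (j : ℝ) * f 1 ∧ f ((j : ℤ) + 1) = ((j : ℝ) + 1) * f 1 := by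
    intro j
    induction j with
    | zero =>
      intro _
      refine ⟨by simpa using h0, by norm_num⟩
    | succ j ih =>
      intro hj
      obtain ⟨e1, e2⟩ := ih (by omega)
      have hr := hrec ((j : ℤ) + 1) (by omega) (by omega)
      have hx : (j : ℤ) + 1 - 1 = (j : ℤ) := by ring
      rw [hx] at hr
      have e3 : f ((j : ℤ) + 1 + 1) = ((j : ℝ) + 2) * f 1 := by
        rw [e1, e2] at hr
        nlinarith [hr]
      constructor
      · push_cast
        exact e2
      · push_cast
        rw [e3]
        ring
  have hf1 : f 1 = 0 := by
    obtain ⟨j', hj'⟩ : ∃ j', N = j' + 1 := ⟨N - 1, by omega⟩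
    have h2 := (key j' (by omega)).2
    have hcast : ((j' : ℤ) + 1) = (N : ℤ) := by rw [hj']; push_cast; ring
    rw [hcast, hNv] at h2
    have hne : ((j' : ℝ) + 1) ≠ 0 := by positivity
    have := h2.symm
    rcases mul_eq_zero.mp this with h | h
    · exact absurd h hne
    · exact h
  intro j hj
  match j with
  | 0 => simpa using h0
  | j' + 1 =>
    rcases Nat.lt_or_ge j' (N) with h | h
    · have h2 := (key j' (by omega)).2
      rw [hf1, mul_zero] at h2
      push_cast
      exact h2
    · omega

def Hf (M : ℕ) (x : ℤ) : ℝ := ((x : ℝ) * ((M : ℝ) - (x : ℝ)) * ((M : ℝ) + (x : ℝ))) / (3 * (M : ℝ))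

lemma Hf_rec (hN : 0 < N) (x : ℤ) :
    Hf N x = (Hf N (x + 1) + Hf N (x - 1)) / 2 + (x : ℝ) / (N : ℝ) := by
  have hne : (N : ℝ) ≠ 0 := by positivity
  unfold Hf
  push_cast
  field_simp
  ring

lemma hitSum_eq (M : ℕ) (x : ℤ) :
    hitSum x (M : ℤ)
        (fun m s => (m : ℝ) * ind (∀ j, 0 < j → j < m → walkPos x s j ≠ 0))
      = Tv M x := by
  unfold hitSum Tv
  refine tsum_congr fun m => ?_
  rcases Nat.eq_zero_or_pos m with hm | hm
  · subst hm
    simp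
  · have hs : ∀ s : Fin m → Bool,
        ind (0 < m ∧ walkPos x s m = (M : ℤ) ∧ ∀ j, 0 < j → j < m → walkPos x s j ≠ (M : ℤ))
            * ((m : ℝ) * ind (∀ j, 0 < j → j < m → walkPos x s j ≠ 0))
          = (m : ℝ) * ind (Agood M x s) := by
      intro s
      have hcomm : ind (0 < m ∧ walkPos x s m = (M : ℤ) ∧ ∀ j, 0 < j → j < m → walkPos x s j ≠ (M : ℤ))
            * ((m : ℝ) * ind (∀ j, 0 < j → j < m → walkPos x s j ≠ 0))
          = (m : ℝ) * (ind (∀ j, 0 < j → j < m → walkPos x s j ≠ 0)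
            * ind (0 < m ∧ walkPos x s m = (M : ℤ) ∧ ∀ j, 0 < j → j < m → walkPos x s j ≠ (M : ℤ))) := by
        ring
      rw [hcomm, ind_mul_ind]
      congr 1
      apply ind_congr
      constructor
      · rintro ⟨hQ, _, h1, hP⟩
        exact ⟨h1, fun j a b => ⟨hP j a b, hQ j a b⟩⟩
      · rintro ⟨h1, h2⟩
        exact ⟨fun j a b => (h2 j a b).2, hm, h1, fun j a b => (h2 j a b).1⟩
    rw [Finset.sum_congr rfl (fun s _ => hs s), ← Finset.mul_sum]
    show (2 : ℝ)⁻¹ ^ m * ((m : ℝ) * Acard M x m) = (m : ℝ) * (2⁻¹ : ℝ) ^ m * Acard M x m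
    ring

end SRW

open SRW in
/-- Proposition 2.1. For the simple symmetric random walk started
at `k ∈ {1, …, n−1}`, `E^k[τ_n 1_{τ_n < τ_0}] = k(n−k)(n+k)/(3n)`. -/
theorem srw_restricted_hitting_time (n k : ℕ) (hk : 1 ≤ k) (hkn : k < n) :
    hitSum (k : ℤ) (n : ℤ)
        (fun m s => (m : ℝ) * ind (∀ j, 0 < j → j < m → walkPos (k : ℤ) s j ≠ 0)) =
      (k : ℝ) * ((n : ℝ) - (k : ℝ)) * ((n : ℝ) + (k : ℝ)) / (3 * (n : ℝ)) := by
  have hn : 0 < n := by omega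
  have hne : (n : ℝ) ≠ 0 := by positivity
  have hstrip : Strip n (k : ℤ) := ⟨by omega, by omega⟩
  -- Step 1: the hitting probability is linear
  have hGval : ∀ j : ℕ, j ≤ n → Gt n (j : ℤ) = (j : ℝ) / (n : ℝ) := by
    have hmain := harm_zero hn (fun x : ℤ => Gt n x - (x : ℝ) / (n : ℝ))
      (by
        simp only [Int.cast_zero, zero_div, sub_zero]
        rw [Gt, if_neg (by omega), if_neg (fun h => by obtain ⟨a, b⟩ := h; omega)])
      (by
        rw [Gt, if_pos rfl]
        push_cast
        field_simp
        ring)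
      (by
        intro x hx1 hx2
        have hG := Gt_rec hn ⟨hx1, hx2⟩
        have hdiv : (((x : ℝ) + 1)) / (n : ℝ) + (((x : ℝ) - 1)) / (n : ℝ)
            = 2 * ((x : ℝ) / (n : ℝ)) := by field_simp; ring
        push_cast
        linarith [hG, hdiv])
    intro j hj
    have h := hmain j hj
    push_cast at h
    linarith
  -- Step 2: the restricted expected hitting time
  have hTval : Tt n (k : ℤ) = Hf n (k : ℤ) := by
    have hmain := harm_zero hn (fun x : ℤ => Tt n x - Hf n x)
      (by
        rw [Tt, if_neg (fun h => by obtain ⟨a, b⟩ := h; omega)]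
        simp [Hf])
      (by
        rw [Tt, if_neg (fun h => by obtain ⟨a, b⟩ := h; omega)]
        have : ((n : ℤ) : ℝ) = (n : ℝ) := by push_cast; ring
        simp [Hf, this])
      (by
        intro x hx1 hx2
        have hT := Tt_rec hn ⟨hx1, hx2⟩
        have hG := Gt_rec hn ⟨hx1, hx2⟩
        have hGx : Gt n x = (x : ℝ) / (n : ℝ) := by
          have hx0 : x = ((x.toNat : ℕ) : ℤ) := (Int.toNat_of_nonneg (by omega)).symm
          rw [hx0, hGval x.toNat (by omega)]
          rw [hx0]
          push_cast
          ring
        have hH := Hf_rec hn x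
        linarith [hT, hG, hGx, hH])
    have h := hmain k (by omega)
    linarith
  -- Conclusion
  rw [hitSum_eq n (k : ℤ), ← Tt_strip hstrip, hTval, Hf]
  push_cast
  ring

end
end

section
/- Let M > 0 and a_1 ∈ ℕ∪{0}, and let V : ℤ → {0, M} be any potential with V(x) = 0 for all x with −a_1 < x ≤ 0 and V(−a_1) = M. Then for the killed random walk started at 0, P^V(τ_1 > τ_{−a_1} | τ_1 < ∞) ≤ min{ e^{−M}, ((2a_1(e^M − 1) + 1)(1 + a_1))^{−1} }. -/
open MeasureTheory ProbabilityTheory Filter Set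

noncomputable section

namespace BTP

open Finset ENNReal

open Classical in
/-- ENNReal indicator of a proposition. -/
def iE (P : Prop) : ℝ≥0∞ := if P then 1 else 0

lemma iE_true {P : Prop} (h : P) : iE P = 1 := by simp [iE, h]
lemma iE_false {P : Prop} (h : ¬ P) : iE P = 0 := by simp [iE, h]
lemma iE_le_one (P : Prop) : iE P ≤ 1 := by by_cases h : P <;> simp [iE, h]
lemma iE_ne_top (P : Prop) : iE P ≠ ⊤ := by by_cases h : P <;> simp [iE, h]
lemma iE_of_iff {P Q : Prop} (h : P ↔ Q) : iE P = iE Q := by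
  by_cases hq : Q
  · rw [iE_true (h.2 hq), iE_true hq]
  · rw [iE_false (h.1.mt hq), iE_false hq]
lemma iE_and (P Q : Prop) : iE (P ∧ Q) = iE P * iE Q := by
  by_cases hp : P <;> by_cases hq : Q <;> simp [iE, hp, hq]
lemma ne_zero_of_iE {P : Prop} (h : iE P ≠ 0) : P := by
  by_contra hp; exact h (iE_false hp)
lemma toReal_iE (P : Prop) : (iE P).toReal = ind P := by
  by_cases h : P <;> simp [iE, ind, h]

/-- step direction -/
def bdir (b : Bool) : ℤ := if b then 1 else -1

lemma walkPos_zero {n : ℕ} (x : ℤ) (s : Fin n → Bool) : walkPos x s 0 = x := by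
  simp [walkPos]

lemma walkPos_shift {n : ℕ} (x : ℤ) (s : Fin (n+1) → Bool) (k : ℕ) :
    walkPos x s (k+1) = walkPos (x + bdir (s 0)) (Fin.tail s) k := by
  unfold walkPos
  rw [Finset.sum_range_succ' (fun i => if h : i < n+1 then (if s ⟨i, h⟩ then (1:ℤ) else -1) else 0) k]
  have h0 : (if h : 0 < n+1 then (if s ⟨0, h⟩ then (1:ℤ) else -1) else 0) = bdir (s 0) := by
    simp only [Nat.zero_lt_succ, dif_pos]; rfl
  have hsh : ∀ i, (if h : i+1 < n+1 then (if s ⟨i+1, h⟩ then (1:ℤ) else -1) else 0)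
      = (if h : i < n then (if Fin.tail s ⟨i, h⟩ then (1:ℤ) else -1) else 0) := by
    intro i
    by_cases h : i < n
    · rw [dif_pos (by omega), dif_pos h]
      rfl
    · rw [dif_neg (by omega), dif_neg h]
  simp only [hsh, h0]
  ring

lemma walkPos_succ_le {n : ℕ} (x : ℤ) (s : Fin n → Bool) (k : ℕ) :
    walkPos x s (k+1) ≤ walkPos x s k + 1 := by
  unfold walkPos
  rw [Finset.sum_range_succ]
  have : (if h : k < n then (if s ⟨k, h⟩ then (1:ℤ) else -1) else 0) ≤ 1 := by
    by_cases h : k < n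
    · rw [dif_pos h]; by_cases hb : s ⟨k, h⟩ <;> simp [hb]
    · rw [dif_neg h]; norm_num
  omega

/-- Discrete intermediate value: if the walk starts ≤ t and is ≥ t at time m, it hits t. -/
lemma walk_ivt {n : ℕ} (x : ℤ) (s : Fin n → Bool) (t : ℤ) (hx : x ≤ t) :
    ∀ m, t ≤ walkPos x s m → ∃ k, k ≤ m ∧ walkPos x s k = t := by
  intro m
  induction m with
  | zero =>
    intro h
    refine ⟨0, le_refl _, ?_⟩
    rw [walkPos_zero] at h ⊢
    omega
  | succ m ih =>
    intro h
    by_cases h' : t ≤ walkPos x s m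
    · obtain ⟨k, hk, hk'⟩ := ih h'
      exact ⟨k, Nat.le_succ_of_le hk, hk'⟩
    · refine ⟨m+1, le_refl _, ?_⟩
      have := walkPos_succ_le x s m
      omega


def w (V : ℤ → ℝ) (x : ℤ) {n : ℕ} (s : Fin n → Bool) : ℝ≥0∞ := ENNReal.ofReal (wt V x s)

lemma wt_nonneg (V : ℤ → ℝ) (x : ℤ) {n : ℕ} (s : Fin n → Bool) : 0 ≤ wt V x s :=
  (Real.exp_pos _).le

lemma w_ne_zero (V : ℤ → ℝ) (x : ℤ) {n : ℕ} (s : Fin n → Bool) : w V x s ≠ 0 := by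
  simp [w, ENNReal.ofReal_eq_zero, wt, Real.exp_pos, not_le]

lemma w_ne_top (V : ℤ → ℝ) (x : ℤ) {n : ℕ} (s : Fin n → Bool) : w V x s ≠ ⊤ :=
  ENNReal.ofReal_ne_top

lemma w_le_one (V : ℤ → ℝ) (hV : ∀ z, 0 ≤ V z) (x : ℤ) {n : ℕ} (s : Fin n → Bool) :
    w V x s ≤ 1 := by
  rw [w, ← ENNReal.ofReal_one]
  apply ENNReal.ofReal_le_ofReal
  rw [wt, ← Real.exp_zero]
  apply Real.exp_le_exp.2
  simp only [neg_nonpos]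
  exact Finset.sum_nonneg (fun i _ => hV _)

lemma wt_shift (V : ℤ → ℝ) (x : ℤ) {n : ℕ} (s : Fin (n+1) → Bool) :
    wt V x s = Real.exp (-V x) * wt V (x + bdir (s 0)) (Fin.tail s) := by
  rw [wt, wt, ← Real.exp_add, Finset.sum_range_succ' (fun m => V (walkPos x s m))]
  congr 1
  have : ∀ m, V (walkPos x s (m+1)) = V (walkPos (x + bdir (s 0)) (Fin.tail s) m) := by
    intro m; rw [walkPos_shift]
  simp only [this]
  have : walkPos x s 0 = x := by simp [walkPos]
  rw [this]; ring

lemma w_shift (V : ℤ → ℝ) (x : ℤ) {n : ℕ} (s : Fin (n+1) → Bool) :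
    w V x s = ENNReal.ofReal (Real.exp (-V x)) * w V (x + bdir (s 0)) (Fin.tail s) := by
  rw [w, wt_shift, ENNReal.ofReal_mul (Real.exp_pos _).le, w]

/-- Append two step sequences. -/
def fapp {n₁ n₂ : ℕ} (s₁ : Fin n₁ → Bool) (s₂ : Fin n₂ → Bool) : Fin (n₁+n₂) → Bool :=
  fun i => if h : (i:ℕ) < n₁ then s₁ ⟨i, h⟩ else s₂ ⟨(i:ℕ) - n₁, by omega⟩

lemma walkPos_fapp_left {n₁ n₂ : ℕ} (x : ℤ) (s₁ : Fin n₁ → Bool) (s₂ : Fin n₂ → Bool)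
    {k : ℕ} (hk : k ≤ n₁) : walkPos x (fapp s₁ s₂) k = walkPos x s₁ k := by
  unfold walkPos
  congr 1
  apply Finset.sum_congr rfl
  intro i hi
  rw [Finset.mem_range] at hi
  have h1 : i < n₁ := lt_of_lt_of_le hi hk
  rw [dif_pos (by omega : i < n₁ + n₂), dif_pos h1]
  simp only [fapp, dif_pos h1]

lemma walkPos_fapp_right {n₁ n₂ : ℕ} (x : ℤ) (s₁ : Fin n₁ → Bool) (s₂ : Fin n₂ → Bool)
    (k : ℕ) (hk : k ≤ n₂) :
    walkPos x (fapp s₁ s₂) (n₁ + k) = walkPos (walkPos x s₁ n₁) s₂ k := by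
  induction k with
  | zero => rw [Nat.add_zero, walkPos_fapp_left x s₁ s₂ (le_refl n₁)]; simp [walkPos]
  | succ k ih =>
    have hk' : k ≤ n₂ := by omega
    unfold walkPos at *
    rw [← Nat.add_assoc, Finset.sum_range_succ, Finset.sum_range_succ]
    have hstep : (if h : n₁ + k < n₁ + n₂ then (if fapp s₁ s₂ ⟨n₁ + k, h⟩ then (1:ℤ) else -1) else 0)
        = (if h : k < n₂ then (if s₂ ⟨k, h⟩ then (1:ℤ) else -1) else 0) := by
      by_cases h : k < n₂
      · rw [dif_pos (by omega), dif_pos h]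
        have : fapp s₁ s₂ ⟨n₁ + k, by omega⟩ = s₂ ⟨k, h⟩ := by
          simp only [fapp, dif_neg (by omega : ¬ (n₁ + k < n₁))]
          congr 1
          apply Fin.ext
          simp only []
          omega
        rw [this]
      · rw [dif_neg (by omega), dif_neg h]
    rw [hstep]
    have := ih hk'
    omega

lemma wt_fapp (V : ℤ → ℝ) (x : ℤ) {n₁ n₂ : ℕ} (s₁ : Fin n₁ → Bool) (s₂ : Fin n₂ → Bool) :
    wt V x (fapp s₁ s₂) = wt V x s₁ * wt V (walkPos x s₁ n₁) s₂ := by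
  rw [wt, wt, wt, ← Real.exp_add, Finset.sum_range_add]
  congr 1
  rw [neg_add]
  congr 1
  · congr 1
    apply Finset.sum_congr rfl
    intro i hi
    rw [Finset.mem_range] at hi
    rw [walkPos_fapp_left x s₁ s₂ (le_of_lt hi)]
  · congr 1
    apply Finset.sum_congr rfl
    intro i hi
    rw [Finset.mem_range] at hi
    rw [walkPos_fapp_right x s₁ s₂ i (le_of_lt hi)]

lemma w_fapp (V : ℤ → ℝ) (x : ℤ) {n₁ n₂ : ℕ} (s₁ : Fin n₁ → Bool) (s₂ : Fin n₂ → Bool) :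
    w V x (fapp s₁ s₂) = w V x s₁ * w V (walkPos x s₁ n₁) s₂ := by
  rw [w, wt_fapp, ENNReal.ofReal_mul (wt_nonneg _ _ _), w, w]


-- chunk 3: finite horizon recursion and supersolution bound
def AV (C : ℤ → Prop) (x : ℤ) {n : ℕ} (s : Fin n → Bool) : Prop :=
  ∀ k, k < n → ¬ C (walkPos x s k)

def FP (x z : ℤ) {n : ℕ} (s : Fin n → Bool) : Prop :=
  0 < n ∧ walkPos x s n = z ∧ ∀ k, 0 < k → k < n → walkPos x s k ≠ z

def FP0 (x z : ℤ) {n : ℕ} (s : Fin n → Bool) : Prop :=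
  walkPos x s n = z ∧ ∀ k, k < n → walkPos x s k ≠ z

def BL (V : ℤ → ℝ) (C : ℤ → Prop) (z : ℤ) (L : ℕ) (x : ℤ) : ℝ≥0∞ :=
  ∑ n ∈ Finset.range (L+1), (2:ℝ≥0∞)⁻¹^n * ∑ s : Fin n → Bool, iE (FP0 x z s ∧ AV C x s) * w V x s

def HL (V : ℤ → ℝ) (C : ℤ → Prop) (z : ℤ) (L : ℕ) (x : ℤ) : ℝ≥0∞ :=
  ∑ n ∈ Finset.range (L+1), (2:ℝ≥0∞)⁻¹^n * ∑ s : Fin n → Bool, iE (FP x z s ∧ AV C x s) * w V x s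

lemma sum_cons_eq {n : ℕ} (F : (Fin (n+1) → Bool) → ℝ≥0∞) :
    ∑ s : Fin (n+1) → Bool, F s = ∑ b : Bool, ∑ s' : Fin n → Bool, F (Fin.cons b s') := by
  rw [← Equiv.sum_comp (Fin.consEquiv (fun _ => Bool)) F, Fintype.sum_prod_type]
  rfl

lemma FP0_cons_iff {n : ℕ} (x z : ℤ) (C : ℤ → Prop) (b : Bool) (s' : Fin n → Bool) :
    (FP0 x z (Fin.cons b s') ∧ AV C x (Fin.cons b s')) ↔
      (x ≠ z ∧ ¬ C x ∧ (FP0 (x + bdir b) z s' ∧ AV C (x + bdir b) s')) := by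
  have hsh : ∀ k : ℕ, walkPos x (Fin.cons b s') (k+1) = walkPos (x + bdir b) s' k := by
    intro k
    rw [walkPos_shift]
    simp [Fin.tail_cons]
  have h0 : walkPos x (Fin.cons b s') 0 = x := walkPos_zero _ _
  constructor
  · rintro ⟨⟨hend, hfp⟩, hav⟩
    refine ⟨h0 ▸ hfp 0 (Nat.succ_pos n), h0 ▸ hav 0 (Nat.succ_pos n), ⟨?_, ?_⟩, ?_⟩
    · rw [← hsh n]; exact hend
    · intro k hk; rw [← hsh k]; exact hfp (k+1) (by omega)
    · intro k hk; rw [← hsh k]; exact hav (k+1) (by omega)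
  · rintro ⟨hxz, hCx, ⟨hend, hfp⟩, hav⟩
    refine ⟨⟨?_, ?_⟩, ?_⟩
    · rw [hsh n]; exact hend
    · intro k hk
      cases k with
      | zero => rw [h0]; exact hxz
      | succ j => rw [hsh j]; exact hfp j (by omega)
    · intro k hk
      cases k with
      | zero => rw [h0]; exact hCx
      | succ j => rw [hsh j]; exact hav j (by omega)

lemma FP_cons_iff {n : ℕ} (x z : ℤ) (C : ℤ → Prop) (b : Bool) (s' : Fin n → Bool) :
    (FP x z (Fin.cons b s') ∧ AV C x (Fin.cons b s')) ↔
      (¬ C x ∧ (FP0 (x + bdir b) z s' ∧ AV C (x + bdir b) s')) := by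
  have hsh : ∀ k : ℕ, walkPos x (Fin.cons b s') (k+1) = walkPos (x + bdir b) s' k := by
    intro k
    rw [walkPos_shift]
    simp [Fin.tail_cons]
  have h0 : walkPos x (Fin.cons b s') 0 = x := walkPos_zero _ _
  constructor
  · rintro ⟨⟨-, hend, hfp⟩, hav⟩
    refine ⟨h0 ▸ hav 0 (Nat.succ_pos n), ⟨?_, ?_⟩, ?_⟩
    · rw [← hsh n]; exact hend
    · intro k hk; rw [← hsh k]; exact hfp (k+1) (by omega) (by omega)
    · intro k hk; rw [← hsh k]; exact hav (k+1) (by omega)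
  · rintro ⟨hCx, ⟨hend, hfp⟩, hav⟩
    refine ⟨⟨Nat.succ_pos n, ?_, ?_⟩, ?_⟩
    · rw [hsh n]; exact hend
    · intro k hk hk'
      cases k with
      | zero => omega
      | succ j => rw [hsh j]; exact hfp j (by omega)
    · intro k hk
      cases k with
      | zero => rw [h0]; exact hCx
      | succ j => rw [hsh j]; exact hav j (by omega)

lemma sum_fin_zero_path (x z : ℤ) (C : ℤ → Prop) (V : ℤ → ℝ) :
    ∑ s : Fin 0 → Bool, iE (FP0 x z s ∧ AV C x s) * w V x s = iE (x = z) := by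
  rw [Fintype.sum_subsingleton _ (fun (i : Fin 0) => false)]
  have h1 : (FP0 x z (fun (i : Fin 0) => false) ∧ AV C x (fun (i : Fin 0) => false)) ↔ x = z := by
    constructor
    · rintro ⟨⟨hend, -⟩, -⟩
      rw [walkPos_zero] at hend; exact hend
    · intro h
      exact ⟨⟨by rw [walkPos_zero]; exact h, fun k hk => absurd hk (Nat.not_lt_zero k)⟩,
        fun k hk => absurd hk (Nat.not_lt_zero k)⟩
  rw [iE_of_iff h1]
  have : w V x (fun (i : Fin 0) => false) = 1 := by
    simp [w, wt]
  rw [this, mul_one]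

lemma BL_zero (V : ℤ → ℝ) (C : ℤ → Prop) (z : ℤ) (x : ℤ) :
    BL V C z 0 x = iE (x = z) := by
  rw [BL, Finset.sum_range_one, sum_fin_zero_path, pow_zero, one_mul]

lemma HL_zero (V : ℤ → ℝ) (C : ℤ → Prop) (z : ℤ) (x : ℤ) :
    HL V C z 0 x = 0 := by
  rw [HL, Finset.sum_range_one, pow_zero, one_mul]
  apply Finset.sum_eq_zero
  intro s _
  rw [iE_false, zero_mul]
  rintro ⟨⟨h, -⟩, -⟩
  omega

lemma BL_of_ne (V : ℤ → ℝ) (C : ℤ → Prop) {z x : ℤ} (hx : x ≠ z) (hC : ¬ C x) (L : ℕ) :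
    BL V C z (L+1) x
      = ENNReal.ofReal (Real.exp (-V x)) * (2⁻¹ * (BL V C z L (x+1) + BL V C z L (x-1))) := by
  rw [BL]
  rw [Finset.sum_range_succ' (fun n => (2:ℝ≥0∞)⁻¹^n * ∑ s : Fin n → Bool, iE (FP0 x z s ∧ AV C x s) * w V x s) (L+1)]
  have hT0 : (2:ℝ≥0∞)⁻¹^0 * ∑ s : Fin 0 → Bool, iE (FP0 x z s ∧ AV C x s) * w V x s = 0 := by
    rw [sum_fin_zero_path, pow_zero, one_mul, iE_false hx]
  rw [hT0, add_zero]
  have hT : ∀ n : ℕ, (2:ℝ≥0∞)⁻¹^(n+1) * ∑ s : Fin (n+1) → Bool, iE (FP0 x z s ∧ AV C x s) * w V x s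
      = ENNReal.ofReal (Real.exp (-V x)) * (2⁻¹ *
          ((2:ℝ≥0∞)⁻¹^n * ∑ s' : Fin n → Bool, iE (FP0 (x+1) z s' ∧ AV C (x+1) s') * w V (x+1) s'
          + (2:ℝ≥0∞)⁻¹^n * ∑ s' : Fin n → Bool, iE (FP0 (x-1) z s' ∧ AV C (x-1) s') * w V (x-1) s')) := by
    intro n
    rw [sum_cons_eq (fun s => iE (FP0 x z s ∧ AV C x s) * w V x s)]
    have hterm : ∀ (b : Bool) (s' : Fin n → Bool),
        iE (FP0 x z (Fin.cons b s') ∧ AV C x (Fin.cons b s')) * w V x (Fin.cons b s')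
        = ENNReal.ofReal (Real.exp (-V x)) *
            (iE (FP0 (x + bdir b) z s' ∧ AV C (x + bdir b) s') * w V (x + bdir b) s') := by
      intro b s'
      have hiE : iE (FP0 x z (Fin.cons b s') ∧ AV C x (Fin.cons b s'))
          = iE (FP0 (x + bdir b) z s' ∧ AV C (x + bdir b) s') := by
        rw [iE_of_iff (FP0_cons_iff x z C b s')]
        by_cases h : FP0 (x + bdir b) z s' ∧ AV C (x + bdir b) s'
        · rw [iE_true ⟨hx, hC, h⟩, iE_true h]
        · rw [iE_false (fun hh => h hh.2.2), iE_false h]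
      have hw : w V x (Fin.cons b s')
          = ENNReal.ofReal (Real.exp (-V x)) * w V (x + bdir b) s' := by
        rw [w_shift]
        simp [Fin.tail_cons]
      rw [hiE, hw]
      ring
    simp only [hterm]
    rw [Fintype.sum_bool]
    have hb1 : x + bdir true = x + 1 := rfl
    have hb2 : x + bdir false = x - 1 := by simp [bdir]; ring
    rw [hb1, hb2]
    rw [← Finset.mul_sum, ← Finset.mul_sum, pow_succ]
    ring
  simp only [hT]
  rw [← Finset.mul_sum]
  congr 1
  rw [← Finset.mul_sum]
  congr 1
  rw [BL, BL, Finset.sum_add_distrib]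

lemma HL_rec (V : ℤ → ℝ) (C : ℤ → Prop) {z x : ℤ} (hC : ¬ C x) (L : ℕ) :
    HL V C z (L+1) x
      = ENNReal.ofReal (Real.exp (-V x)) * (2⁻¹ * (BL V C z L (x+1) + BL V C z L (x-1))) := by
  rw [HL]
  rw [Finset.sum_range_succ' (fun n => (2:ℝ≥0∞)⁻¹^n * ∑ s : Fin n → Bool, iE (FP x z s ∧ AV C x s) * w V x s) (L+1)]
  have hT0 : (2:ℝ≥0∞)⁻¹^0 * ∑ s : Fin 0 → Bool, iE (FP x z s ∧ AV C x s) * w V x s = 0 := by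
    rw [pow_zero, one_mul]
    apply Finset.sum_eq_zero
    intro s _
    rw [iE_false, zero_mul]
    rintro ⟨⟨h, -⟩, -⟩
    omega
  rw [hT0, add_zero]
  have hT : ∀ n : ℕ, (2:ℝ≥0∞)⁻¹^(n+1) * ∑ s : Fin (n+1) → Bool, iE (FP x z s ∧ AV C x s) * w V x s
      = ENNReal.ofReal (Real.exp (-V x)) * (2⁻¹ *
          ((2:ℝ≥0∞)⁻¹^n * ∑ s' : Fin n → Bool, iE (FP0 (x+1) z s' ∧ AV C (x+1) s') * w V (x+1) s'
          + (2:ℝ≥0∞)⁻¹^n * ∑ s' : Fin n → Bool, iE (FP0 (x-1) z s' ∧ AV C (x-1) s') * w V (x-1) s')) := by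
    intro n
    rw [sum_cons_eq (fun s => iE (FP x z s ∧ AV C x s) * w V x s)]
    have hterm : ∀ (b : Bool) (s' : Fin n → Bool),
        iE (FP x z (Fin.cons b s') ∧ AV C x (Fin.cons b s')) * w V x (Fin.cons b s')
        = ENNReal.ofReal (Real.exp (-V x)) *
            (iE (FP0 (x + bdir b) z s' ∧ AV C (x + bdir b) s') * w V (x + bdir b) s') := by
      intro b s'
      have hiE : iE (FP x z (Fin.cons b s') ∧ AV C x (Fin.cons b s'))
          = iE (FP0 (x + bdir b) z s' ∧ AV C (x + bdir b) s') := by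
        rw [iE_of_iff (FP_cons_iff x z C b s')]
        by_cases h : FP0 (x + bdir b) z s' ∧ AV C (x + bdir b) s'
        · rw [iE_true ⟨hC, h⟩, iE_true h]
        · rw [iE_false (fun hh => h hh.2), iE_false h]
      have hw : w V x (Fin.cons b s')
          = ENNReal.ofReal (Real.exp (-V x)) * w V (x + bdir b) s' := by
        rw [w_shift]
        simp [Fin.tail_cons]
      rw [hiE, hw]
      ring
    simp only [hterm]
    rw [Fintype.sum_bool]
    have hb1 : x + bdir true = x + 1 := rfl
    have hb2 : x + bdir false = x - 1 := by simp [bdir]; ring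
    rw [hb1, hb2]
    rw [← Finset.mul_sum, ← Finset.mul_sum, pow_succ]
    ring
  simp only [hT]
  rw [← Finset.mul_sum]
  congr 1
  rw [← Finset.mul_sum]
  congr 1
  rw [BL, BL, Finset.sum_add_distrib]

lemma BL_z (V : ℤ → ℝ) (C : ℤ → Prop) (z : ℤ) (L : ℕ) : BL V C z L z = 1 := by
  induction L with
  | zero => rw [BL_zero, iE_true rfl]
  | succ L ih =>
    rw [BL]
    rw [Finset.sum_range_succ]
    have : (2:ℝ≥0∞)⁻¹^(L+1) * ∑ s : Fin (L+1) → Bool, iE (FP0 z z s ∧ AV C z s) * w V z s = 0 := by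
      have : ∀ s : Fin (L+1) → Bool, iE (FP0 z z s ∧ AV C z s) * w V z s = 0 := by
        intro s
        rw [iE_false, zero_mul]
        rintro ⟨⟨-, hfp⟩, -⟩
        exact hfp 0 (Nat.succ_pos L) (walkPos_zero z s)
      rw [Finset.sum_congr rfl (fun s _ => this s), Finset.sum_const, smul_zero, mul_zero]
    rw [this, add_zero, ← BL, ih]

lemma BL_le_super (V : ℤ → ℝ) (C : ℤ → Prop) (z : ℤ) (u : ℤ → ℝ≥0∞)
    (huz : 1 ≤ u z)
    (hu : ∀ x : ℤ, x ≠ z → ¬ C x →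
      ENNReal.ofReal (Real.exp (-V x)) * (2⁻¹ * (u (x+1) + u (x-1))) ≤ u x) :
    ∀ (L : ℕ) (x : ℤ), BL V C z L x ≤ u x := by
  intro L
  induction L with
  | zero =>
    intro x
    rw [BL_zero]
    by_cases h : x = z
    · rw [iE_true h, h]; exact huz
    · rw [iE_false h]; exact zero_le
  | succ L ih =>
    intro x
    by_cases hx : x = z
    · subst hx; rw [BL_z]; exact huz
    · by_cases hC : C x
      · -- all terms vanish
        have : BL V C z (L+1) x = 0 := by
          rw [BL]
          apply Finset.sum_eq_zero
          intro n hn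
          rw [mul_eq_zero]
          right
          apply Finset.sum_eq_zero
          intro s _
          rw [iE_false, zero_mul]
          rintro ⟨hfp0, hav⟩
          cases n with
          | zero =>
            have h' := hfp0.1
            rw [walkPos_zero] at h'
            exact hx h'
          | succ m =>
            apply hav 0 (Nat.succ_pos m)
            rw [walkPos_zero]
            exact hC
        rw [this]; exact zero_le
      · rw [BL_of_ne V C hx hC L]
        refine le_trans ?_ (hu x hx hC)
        gcongr <;> exact ih _

def HS (V : ℤ → ℝ) (C : ℤ → Prop) (x z : ℤ) : ℝ≥0∞ :=
  ∑' p : (Σ n : ℕ, Fin n → Bool), (2:ℝ≥0∞)⁻¹^p.1 * (iE (FP x z p.2 ∧ AV C x p.2) * w V x p.2)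

lemma HS_le (V : ℤ → ℝ) (C : ℤ → Prop) (x z : ℤ) (u : ℤ → ℝ≥0∞)
    (huz : 1 ≤ u z)
    (hu : ∀ y : ℤ, y ≠ z → ¬ C y →
      ENNReal.ofReal (Real.exp (-V y)) * (2⁻¹ * (u (y+1) + u (y-1))) ≤ u y)
    (hCx : ¬ C x) :
    HS V C x z ≤ ENNReal.ofReal (Real.exp (-V x)) * (2⁻¹ * (u (x+1) + u (x-1))) := by
  rw [HS, ENNReal.tsum_eq_iSup_sum]
  apply iSup_le
  intro F
  set L := F.sup (fun p => p.1) with hL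
  have hsub : F ⊆ (Finset.range (L+1+1)).sigma (fun n => Finset.univ) := by
    intro p hp
    rw [Finset.mem_sigma]
    have h1 : p.1 ≤ L := Finset.le_sup (f := fun p : (Σ n : ℕ, Fin n → Bool) => p.1) hp
    exact ⟨Finset.mem_range.2 (by omega), Finset.mem_univ _⟩
  refine le_trans (Finset.sum_le_sum_of_subset hsub) ?_
  rw [Finset.sum_sigma]
  have : ∑ n ∈ Finset.range (L+1+1), ∑ s : Fin n → Bool,
      (2:ℝ≥0∞)⁻¹^n * (iE (FP x z s ∧ AV C x s) * w V x s) = HL V C z (L+1) x := by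
    rw [HL]
    apply Finset.sum_congr rfl
    intro n _
    rw [Finset.mul_sum]
  rw [this, HL_rec V C hCx L]
  gcongr <;> exact BL_le_super V C z u huz hu L _

-- chunk 4 : splitting at the first visit of an intermediate site
lemma walkPos_ext {n m : ℕ} (h : n = m) (x : ℤ) (s : Fin n → Bool) (t : Fin m → Bool)
    (hst : ∀ i : Fin n, s i = t (Fin.cast h i)) (k : ℕ) : walkPos x s k = walkPos x t k := by
  subst h
  have hst' : s = t := funext (fun i => by rw [hst]; rfl)
  rw [hst']

lemma walkPos_restrict {n m : ℕ} (hm : m ≤ n) (x : ℤ) (s : Fin n → Bool) {k : ℕ} (hk : k ≤ m) :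
    walkPos x (fun i : Fin m => s ⟨i.1, lt_of_lt_of_le i.2 hm⟩) k = walkPos x s k := by
  unfold walkPos
  congr 1
  apply Finset.sum_congr rfl
  intro i hi
  rw [Finset.mem_range] at hi
  have h1 : i < m := lt_of_lt_of_le hi hk
  rw [dif_pos h1, dif_pos (lt_of_lt_of_le h1 hm)]

lemma concat_FP {x y z : ℤ} (hxz : x ≠ z) (hyz : y ≠ z) {n₁ n₂ : ℕ}
    (s₁ : Fin n₁ → Bool) (s₂ : Fin n₂ → Bool)
    (h1 : FP x y s₁) (h2 : AV (· = z) x s₁) (h3 : FP y z s₂) :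
    FP x z (fapp s₁ s₂) ∧ (0 < n₁ ∧ n₁ < n₁ + n₂ ∧ walkPos x (fapp s₁ s₂) n₁ = y) := by
  obtain ⟨hn₁, hend₁, hfp₁⟩ := h1
  obtain ⟨hn₂, hend₂, hfp₂⟩ := h3
  have hmid : walkPos x (fapp s₁ s₂) n₁ = y := by
    rw [walkPos_fapp_left x s₁ s₂ (le_refl n₁)]; exact hend₁
  have hright : ∀ j, j ≤ n₂ → walkPos x (fapp s₁ s₂) (n₁ + j) = walkPos y s₂ j := by
    intro j hj
    rw [walkPos_fapp_right x s₁ s₂ j hj, hend₁]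
  refine ⟨⟨by omega, ?_, ?_⟩, by omega, by omega, hmid⟩
  · have := hright n₂ (le_refl n₂)
    rw [this]; exact hend₂
  · intro k hk hk'
    by_cases hkn : k ≤ n₁
    · rw [walkPos_fapp_left x s₁ s₂ hkn]
      rcases Nat.lt_or_ge k n₁ with h | h
      · exact h2 k h
      · have : k = n₁ := by omega
        rw [this, hend₁]; exact hyz
    · have hk2 : k - n₁ ≤ n₂ := by omega
      have : k = n₁ + (k - n₁) := by omega
      rw [this, hright _ hk2]
      rcases Nat.eq_zero_or_pos (k - n₁) with h | h
      · omega
      · exact hfp₂ _ h (by omega)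

lemma SPLIT (V : ℤ → ℝ) (x y z : ℤ) (hxz : x ≠ z) (hyz : y ≠ z)
    (E : (n : ℕ) → (Fin n → Bool) → Prop)
    (hE : ∀ (n : ℕ) (s : Fin n → Bool), FP x z s →
      (E n s ↔ ∃ k, 0 < k ∧ k < n ∧ walkPos x s k = y)) :
    (∑' p : (Σ n : ℕ, Fin n → Bool), (2:ℝ≥0∞)⁻¹^p.1 * (iE (FP x z p.2 ∧ E p.1 p.2) * w V x p.2))
      = HS V (· = z) x y * HS V (fun _ => False) y z := by
  classical
  set A : (Σ n : ℕ, Fin n → Bool) → ℝ≥0∞ :=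
    fun p => (2:ℝ≥0∞)⁻¹^p.1 * (iE (FP x y p.2 ∧ AV (· = z) x p.2) * w V x p.2) with hA
  set B : (Σ n : ℕ, Fin n → Bool) → ℝ≥0∞ :=
    fun p => (2:ℝ≥0∞)⁻¹^p.1 * (iE (FP y z p.2 ∧ AV (fun _ => False) y p.2) * w V y p.2) with hB
  set f : (Σ n : ℕ, Fin n → Bool) → ℝ≥0∞ :=
    fun p => (2:ℝ≥0∞)⁻¹^p.1 * (iE (FP x z p.2 ∧ E p.1 p.2) * w V x p.2) with hf
  set g : ((Σ n : ℕ, Fin n → Bool) × (Σ n : ℕ, Fin n → Bool)) → ℝ≥0∞ :=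
    fun q => A q.1 * B q.2 with hg
  have hsupp : ∀ q, g q ≠ 0 →
      (FP x y q.1.2 ∧ AV (· = z) x q.1.2) ∧ FP y z q.2.2 := by
    intro q hq
    constructor
    · by_contra h
      apply hq
      have h0 : iE (FP x y q.1.2 ∧ AV (· = z) x q.1.2) = 0 := iE_false h
      simp [hg, hA, h0]
    · by_contra h
      apply hq
      have h0 : iE (FP y z q.2.2 ∧ AV (fun _ => False) y q.2.2) = 0 :=
        iE_false (fun hh => h hh.1)
      simp [hg, hB, h0]
  have key : (∑' p, f p) = ∑' q, g q := by
    apply tsum_eq_tsum_of_ne_zero_bij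
      (fun q => ⟨q.1.1.1 + q.1.2.1, fapp q.1.1.2 q.1.2.2⟩)
    · -- injectivity
      rintro ⟨⟨⟨n₁, s₁⟩, ⟨n₂, s₂⟩⟩, hq⟩ ⟨⟨⟨m₁, t₁⟩, ⟨m₂, t₂⟩⟩, hq'⟩ heq
      simp only [Function.mem_support] at hq hq'
      obtain ⟨⟨hfp₁, hav₁⟩, hfp₂⟩ := hsupp _ hq
      obtain ⟨⟨hfp₁', hav₁'⟩, hfp₂'⟩ := hsupp _ hq'
      injection heq with hlen0 hheq0
      have hlen : n₁ + n₂ = m₁ + m₂ := hlen0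
      have hheq : HEq (fapp s₁ s₂) (fapp t₁ t₂) := hheq0
      have hpt := (Fin.heq_fun_iff hlen).1 hheq
      have hwalk : ∀ k, walkPos x (fapp s₁ s₂) k = walkPos x (fapp t₁ t₂) k :=
        walkPos_ext hlen x _ _ hpt
      -- first hitting time of y characterizes n₁ and m₁
      have hchar : ∀ (n₁' n₂' : ℕ) (s₁' : Fin n₁' → Bool) (s₂' : Fin n₂' → Bool),
          FP x y s₁' → (walkPos x (fapp s₁' s₂') n₁' = y ∧
            ∀ k, 0 < k → k < n₁' → walkPos x (fapp s₁' s₂') k ≠ y) := by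
        intro n₁' n₂' s₁' s₂' hfp
        constructor
        · rw [walkPos_fapp_left x s₁' s₂' (le_refl _)]; exact hfp.2.1
        · intro k hk hk'
          rw [walkPos_fapp_left x s₁' s₂' (le_of_lt hk')]
          exact hfp.2.2 k hk hk'
      obtain ⟨hy1, hmin1⟩ := hchar n₁ n₂ s₁ s₂ hfp₁
      obtain ⟨hy2, hmin2⟩ := hchar m₁ m₂ t₁ t₂ hfp₁'
      have hn₁ : n₁ = m₁ := by
        by_contra hne
        rcases Nat.lt_or_ge n₁ m₁ with h | h
        · exact hmin2 n₁ hfp₁.1 h (by rw [← hwalk n₁]; exact hy1)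
        · exact hmin1 m₁ hfp₁'.1 (by omega) (by rw [hwalk m₁]; exact hy2)
      subst hn₁
      have hn₂ : n₂ = m₂ := by omega
      subst hn₂
      have hfe : fapp s₁ s₂ = fapp t₁ t₂ := by
        funext i
        rw [hpt i]
      have hs₁ : s₁ = t₁ := by
        funext i
        have := congrFun hfe ⟨i.1, by omega⟩
        simpa [fapp, dif_pos i.2] using this
      have hs₂ : s₂ = t₂ := by
        funext j
        have := congrFun hfe ⟨n₁ + j.1, by omega⟩
        have hlt : ¬ (n₁ + j.1 < n₁) := by omega
        simp only [fapp, dif_neg hlt] at this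
        have harg : ∀ (u : Fin n₂ → Bool) (p : n₁ + j.1 - n₁ < n₂), u ⟨n₁ + j.1 - n₁, p⟩ = u j := by
          intro u p
          congr 1
          apply Fin.ext
          simp only []
          omega
        rw [harg s₂ _, harg t₂ _] at this
        exact this
      apply Subtype.ext
      simp [hs₁, hs₂]
    · -- support f ⊆ range
      rintro ⟨n, s⟩ hp
      simp only [Function.mem_support, hf] at hp
      have hcond : FP x z s ∧ E n s := by
        by_contra h
        exact hp (by simp [iE_false h])
      obtain ⟨hfp, hEv⟩ := hcond
      have hex : ∃ k, 0 < k ∧ walkPos x s k = y := by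
        obtain ⟨k, hk1, hk2, hk3⟩ := (hE n s hfp).1 hEv
        exact ⟨k, hk1, hk3⟩
      set k₀ := Nat.find hex with hk₀
      obtain ⟨hk₀pos, hk₀y⟩ := Nat.find_spec hex
      have hk₀min : ∀ k, 0 < k → k < k₀ → walkPos x s k ≠ y := by
        intro k hk hkk₀ hy
        exact Nat.find_min hex hkk₀ ⟨hk, hy⟩
      have hk₀n : k₀ < n := by
        obtain ⟨k, hk1, hk2, hk3⟩ := (hE n s hfp).1 hEv
        have := Nat.find_min' hex ⟨hk1, hk3⟩
        omega
      set s₁ : Fin k₀ → Bool := fun i => s ⟨i.1, lt_of_lt_of_le i.2 (le_of_lt hk₀n)⟩ with hs₁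
      set s₂ : Fin (n - k₀) → Bool := fun j => s ⟨k₀ + j.1, by omega⟩ with hs₂
      have hres : ∀ k, k ≤ k₀ → walkPos x s₁ k = walkPos x s k := by
        intro k hk
        rw [hs₁]
        exact walkPos_restrict (le_of_lt hk₀n) x s hk
      have hfeq : fapp s₁ s₂ = fun i : Fin (k₀ + (n - k₀)) => s ⟨i.1, by omega⟩ := by
        funext i
        by_cases h : i.1 < k₀
        · simp only [fapp, dif_pos h, hs₁]
        · simp only [fapp, dif_neg h, hs₂]
          congr 1
          apply Fin.ext
          simp only []
          omega
      have hlen : k₀ + (n - k₀) = n := by omega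
      have hwalk2 : ∀ k, walkPos x (fapp s₁ s₂) k = walkPos x s k := by
        intro k
        rw [hfeq]
        apply walkPos_ext hlen
        intro i
        congr 1
      have hsuf : ∀ j, j ≤ n - k₀ → walkPos y s₂ j = walkPos x s (k₀ + j) := by
        intro j hj
        have := walkPos_fapp_right x s₁ s₂ j hj
        rw [hwalk2 (k₀ + j)] at this
        rw [hres k₀ (le_refl _)] at this
        rw [hk₀y] at this
        exact this.symm
      have hq1 : FP x y s₁ ∧ AV (· = z) x s₁ := by
        refine ⟨⟨hk₀pos, ?_, ?_⟩, ?_⟩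
        · rw [hres k₀ (le_refl _)]; exact hk₀y
        · intro k hk hk'
          rw [hres k (le_of_lt hk')]
          exact hk₀min k hk hk'
        · intro k hk
          rw [hres k (le_of_lt hk)]
          rcases Nat.eq_zero_or_pos k with h | h
          · subst h; rw [walkPos_zero]; exact hxz
          · exact hfp.2.2 k h (by omega)
      have hq2 : FP y z s₂ := by
        refine ⟨by omega, ?_, ?_⟩
        · rw [hsuf (n - k₀) (le_refl _)]
          have : k₀ + (n - k₀) = n := by omega
          rw [this]
          exact hfp.2.1
        · intro j hj hj'
          rw [hsuf j (le_of_lt hj')]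
          exact hfp.2.2 (k₀ + j) (by omega) (by omega)
      refine ⟨⟨(⟨⟨k₀, s₁⟩, ⟨n - k₀, s₂⟩⟩ : _ × _), ?_⟩, ?_⟩
      · -- membership in support g
        simp only [Function.mem_support, hg, hA, hB]
        apply mul_ne_zero
        · apply mul_ne_zero
          · exact pow_ne_zero _ (ENNReal.inv_ne_zero.2 (by norm_num))
          · apply mul_ne_zero
            · rw [iE_true hq1]; norm_num
            · exact w_ne_zero V x s₁
        · apply mul_ne_zero
          · exact pow_ne_zero _ (ENNReal.inv_ne_zero.2 (by norm_num))
          · apply mul_ne_zero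
            · rw [iE_true ⟨hq2, fun k _ => not_false⟩]; norm_num
            · exact w_ne_zero V y s₂
      · -- the image is (n, s)
        simp only []
        apply Sigma.ext
        · exact hlen
        · apply (Fin.heq_fun_iff hlen).2
          intro i
          rw [hfeq]
      -- done with surjectivity
    · -- value equality
      rintro ⟨⟨⟨n₁, s₁⟩, ⟨n₂, s₂⟩⟩, hq⟩
      simp only [Function.mem_support] at hq
      obtain ⟨⟨hfp₁, hav₁⟩, hfp₂⟩ := hsupp _ hq
      obtain ⟨hFP, hhit⟩ := concat_FP hxz hyz s₁ s₂ hfp₁ hav₁ hfp₂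
      have hEc : E (n₁ + n₂) (fapp s₁ s₂) := by
        rw [hE _ _ hFP]
        exact ⟨n₁, hhit⟩
      simp only [hf, hg, hA, hB]
      rw [iE_true ⟨hFP, hEc⟩, iE_true ⟨hfp₁, hav₁⟩, iE_true ⟨hfp₂, fun k _ => not_false⟩]
      rw [w_fapp V x s₁ s₂, hfp₁.2.1, pow_add]
      ring
  rw [key, hg]
  rw [ENNReal.tsum_prod (f := fun p₁ p₂ => A p₁ * B p₂)]
  have h1 : ∀ p₁, (∑' p₂, A p₁ * B p₂) = A p₁ * ∑' p₂, B p₂ := fun p₁ => ENNReal.tsum_mul_left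
  rw [tsum_congr h1, ENNReal.tsum_mul_right]
  rfl

-- chunk 5 : explicit supersolutions
lemma collapse (e u1 u2 : ℝ) (he : 0 ≤ e) (h1 : 0 ≤ u1) (h2 : 0 ≤ u2) :
    ENNReal.ofReal e * (2⁻¹ * (ENNReal.ofReal u1 + ENNReal.ofReal u2))
      = ENNReal.ofReal (e * ((u1 + u2)/2)) := by
  rw [← ENNReal.ofReal_add h1 h2]
  have h2' : (2:ℝ≥0∞)⁻¹ = ENNReal.ofReal (1/2) := by
    rw [ENNReal.ofReal_div_of_pos (by norm_num), ENNReal.ofReal_one]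
    norm_num
  rw [h2', ← ENNReal.ofReal_mul (by norm_num), ← ENNReal.ofReal_mul he]
  congr 1
  ring

lemma HS_le_real (V : ℤ → ℝ) (C : ℤ → Prop) (x z : ℤ) (ur : ℤ → ℝ)
    (hnn : ∀ t, 0 ≤ ur t) (huz : 1 ≤ ur z)
    (hur : ∀ y : ℤ, y ≠ z → ¬ C y →
      Real.exp (-V y) * ((ur (y+1) + ur (y-1))/2) ≤ ur y)
    (hCx : ¬ C x) :
    HS V C x z ≤ ENNReal.ofReal (Real.exp (-V x) * ((ur (x+1) + ur (x-1))/2)) := by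
  have hu : ∀ y : ℤ, y ≠ z → ¬ C y →
      ENNReal.ofReal (Real.exp (-V y)) * (2⁻¹ * (ENNReal.ofReal (ur (y+1)) + ENNReal.ofReal (ur (y-1))))
        ≤ ENNReal.ofReal (ur y) := by
    intro y h1 h2
    rw [collapse _ _ _ (Real.exp_pos _).le (hnn _) (hnn _)]
    exact ENNReal.ofReal_le_ofReal (hur y h1 h2)
  have := HS_le V C x z (fun t => ENNReal.ofReal (ur t)) (ENNReal.one_le_ofReal.2 huz) hu hCx
  refine le_trans this (le_of_eq ?_)
  exact collapse _ _ _ (Real.exp_pos _).le (hnn _) (hnn _)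

lemma exp_neg_le_one {v : ℝ} (hv : 0 ≤ v) : Real.exp (-v) ≤ 1 := by
  rw [← Real.exp_zero]
  exact Real.exp_le_exp.2 (by linarith)

lemma HS_le_exp (V : ℤ → ℝ) (hV : ∀ t, 0 ≤ V t) (C : ℤ → Prop) (x z : ℤ) (hCx : ¬ C x) :
    HS V C x z ≤ ENNReal.ofReal (Real.exp (-V x)) := by
  have h := HS_le_real V C x z (fun _ => 1) (fun _ => zero_le_one) le_rfl
    (fun y _ _ => by
      beta_reduce
      have := exp_neg_le_one (hV y)
      nlinarith [Real.exp_pos (-V y)])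
    hCx
  refine le_trans h (ENNReal.ofReal_le_ofReal ?_)
  beta_reduce
  nlinarith [Real.exp_pos (-V x), exp_neg_le_one (hV x)]

lemma HS_le_one (V : ℤ → ℝ) (hV : ∀ t, 0 ≤ V t) (C : ℤ → Prop) (x z : ℤ) (hCx : ¬ C x) :
    HS V C x z ≤ 1 := by
  refine le_trans (HS_le_exp V hV C x z hCx) ?_
  rw [← ENNReal.ofReal_one]
  exact ENNReal.ofReal_le_ofReal (exp_neg_le_one (hV x))

/-- gambler's ruin supersolution -/
def u1r (a₁ : ℕ) : ℤ → ℝ := fun t =>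
  if t ≤ -(a₁:ℤ) then 1 else if 1 ≤ t then 0 else (1 - (t:ℝ))/(1 + (a₁:ℝ))

lemma u1r_nonneg (a₁ : ℕ) (t : ℤ) : 0 ≤ u1r a₁ t := by
  unfold u1r
  by_cases h1 : t ≤ -(a₁:ℤ)
  · rw [if_pos h1]; norm_num
  · rw [if_neg h1]
    by_cases h2 : (1:ℤ) ≤ t
    · rw [if_pos h2]
    · rw [if_neg h2]
      have ht : (t:ℝ) ≤ 1 := by exact_mod_cast (by omega : t ≤ 1)
      have ha : (0:ℝ) ≤ (a₁:ℝ) := Nat.cast_nonneg _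
      apply div_nonneg (by linarith) (by linarith)

lemma u1r_eq (a₁ : ℕ) (t : ℤ) (h1 : -(a₁:ℤ) ≤ t) (h2 : t ≤ 1) :
    u1r a₁ t = (1 - (t:ℝ))/(1 + (a₁:ℝ)) := by
  unfold u1r
  by_cases hb : t ≤ -(a₁:ℤ)
  · rw [if_pos hb]
    have ht : t = -(a₁:ℤ) := le_antisymm hb h1
    subst ht
    have : ((-(a₁:ℤ) : ℤ) : ℝ) = -(a₁:ℝ) := by push_cast; ring
    rw [this]
    have ha : (0:ℝ) < 1 + (a₁:ℝ) := by positivity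
    rw [_root_.eq_div_iff (ne_of_gt ha)]
    ring
  · rw [if_neg hb]
    by_cases hc : (1:ℤ) ≤ t
    · rw [if_pos hc]
      have ht : t = 1 := le_antisymm h2 hc
      subst ht
      norm_num
    · rw [if_neg hc]

lemma Fbound (M : ℝ) (hM : 0 < M) (a₁ : ℕ) (ha : 1 ≤ a₁) (V : ℤ → ℝ)
    (hval : ∀ z : ℤ, V z = 0 ∨ V z = M)
    (hvac : ∀ x : ℤ, -(a₁ : ℤ) < x → x ≤ 0 → V x = 0) :
    HS V (· = 1) 0 (-(a₁:ℤ)) ≤ ENNReal.ofReal (1/(1 + (a₁:ℝ))) := by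
  have hV : ∀ t, 0 ≤ V t := by
    intro t
    rcases hval t with h | h <;> rw [h]
    exact hM.le
  have hA1 : (1:ℝ) ≤ (a₁:ℝ) := by exact_mod_cast ha
  have hur : ∀ y : ℤ, y ≠ -(a₁:ℤ) → ¬ (y = 1) →
      Real.exp (-V y) * ((u1r a₁ (y+1) + u1r a₁ (y-1))/2) ≤ u1r a₁ y := by
    intro y hyz hyC
    have hexp := exp_neg_le_one (hV y)
    have hexppos := Real.exp_pos (-V y)
    rcases lt_trichotomy y (-(a₁:ℤ)) with hc | hc | hc
    · -- y ≤ -a-1 : all values 1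
      have e1 : u1r a₁ (y+1) ≤ 1 := by
        unfold u1r
        by_cases h1 : y+1 ≤ -(a₁:ℤ)
        · rw [if_pos h1]
        · rw [if_neg h1]
          by_cases h2 : (1:ℤ) ≤ y + 1
          · rw [if_pos h2]; norm_num
          · rw [if_neg h2]
            have hy1 : ((y+1 : ℤ):ℝ) ≤ 1 := by exact_mod_cast (by omega : y+1 ≤ 1)
            have hy2 : (0:ℝ) ≤ 1 - ((y+1:ℤ):ℝ) := by linarith
            rw [div_le_one (by positivity)]
            push_cast at hy1 ⊢
            linarith
      have e2 : u1r a₁ (y-1) = 1 := by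
        unfold u1r; rw [if_pos (by omega)]
      have e3 : u1r a₁ y = 1 := by
        unfold u1r; rw [if_pos (by omega)]
      have h1 := u1r_nonneg a₁ (y+1)
      rw [e2, e3]
      nlinarith
    · exact absurd hc hyz
    · -- y > -a
      rcases lt_trichotomy y 1 with hd | hd | hd
      · -- interior : -a < y < 1, exact harmonicity, V y = 0
        have hVy : V y = 0 := hvac y hc (by omega)
        have f0 : u1r a₁ y = (1 - (y:ℝ))/(1 + (a₁:ℝ)) := u1r_eq a₁ y (by omega) (by omega)
        have f1 : u1r a₁ (y+1) = (1 - ((y+1:ℤ):ℝ))/(1 + (a₁:ℝ)) := u1r_eq a₁ (y+1) (by omega) (by omega)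
        have f2 : u1r a₁ (y-1) = (1 - ((y-1:ℤ):ℝ))/(1 + (a₁:ℝ)) := u1r_eq a₁ (y-1) (by omega) (by omega)
        rw [hVy, f0, f1, f2]
        push_cast
        rw [neg_zero, Real.exp_zero, one_mul]
        have ha : (0:ℝ) < 1 + (a₁:ℝ) := by positivity
        apply le_of_eq
        field_simp
        ring
      · exact absurd hd hyC
      · -- y ≥ 2 : all zero
        have e1 : u1r a₁ (y+1) = 0 := by
          unfold u1r; rw [if_neg (by omega), if_pos (by omega)]
        have e2 : u1r a₁ (y-1) = 0 := by
          unfold u1r; rw [if_neg (by omega), if_pos (by omega)]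
        have e3 : u1r a₁ y = 0 := by
          unfold u1r; rw [if_neg (by omega), if_pos (by omega)]
        rw [e1, e2, e3]
        norm_num
  have huz : 1 ≤ u1r a₁ (-(a₁:ℤ)) := by
    unfold u1r; rw [if_pos (le_refl _)]
  have h := HS_le_real V (· = 1) 0 (-(a₁:ℤ)) (u1r a₁) (u1r_nonneg a₁) huz hur (by norm_num)
  refine le_trans h (le_of_eq ?_)
  congr 1
  have hV0 : V 0 = 0 := hvac 0 (by omega) le_rfl
  have f1 : u1r a₁ (0+1) = 0 := by
    unfold u1r; rw [if_neg (by omega), if_pos (by omega)]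
  have f2 : u1r a₁ (0-1) = (1 - ((-1:ℤ):ℝ))/(1 + (a₁:ℝ)) := u1r_eq a₁ (0-1) (by omega) (by omega)
  rw [hV0, f1, f2]
  push_cast
  rw [neg_zero, Real.exp_zero, one_mul]
  have ha : (0:ℝ) < 1 + (a₁:ℝ) := by positivity
  field_simp
  ring

-- chunk 5b : the beta supersolution
lemma beta_pos (M A : ℝ) (hM : 0 < M) (hA : 0 ≤ A) : 0 < 2*A*(Real.exp M - 1) + 1 := by
  have hE : 1 < Real.exp M := by
    rw [← Real.exp_zero]
    exact Real.exp_lt_exp.2 hM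
  nlinarith

def u2r (a₁ : ℕ) (M : ℝ) : ℤ → ℝ := fun t =>
  if t ≤ -(a₁:ℤ) then (2*(a₁:ℝ)*(Real.exp M - 1) + 1)⁻¹
  else if 1 ≤ t then 0
  else 1 + (1 - (2*(a₁:ℝ)*(Real.exp M - 1) + 1)⁻¹) * (t:ℝ)/(a₁:ℝ)

lemma u2r_formula (a₁ : ℕ) (ha : 1 ≤ a₁) (M : ℝ) (hM : 0 < M) (t : ℤ)
    (h1 : -(a₁:ℤ) ≤ t) (h2 : t ≤ 0) :
    u2r a₁ M t = 1 + (1 - (2*(a₁:ℝ)*(Real.exp M - 1) + 1)⁻¹) * (t:ℝ)/(a₁:ℝ) := by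
  unfold u2r
  have hA1 : (1:ℝ) ≤ (a₁:ℝ) := by exact_mod_cast ha
  by_cases hb : t ≤ -(a₁:ℤ)
  · rw [if_pos hb]
    have ht : t = -(a₁:ℤ) := le_antisymm hb h1
    subst ht
    have hc : ((-(a₁:ℤ) : ℤ) : ℝ) = -(a₁:ℝ) := by push_cast; ring
    rw [hc]
    have hane : (a₁:ℝ) ≠ 0 := by linarith
    field_simp
    ring
  · rw [if_neg hb, if_neg (by omega)]

lemma u2r_nonneg (a₁ : ℕ) (ha : 1 ≤ a₁) (M : ℝ) (hM : 0 < M) (t : ℤ) :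
    0 ≤ u2r a₁ M t := by
  have hd := beta_pos M (a₁:ℝ) hM (Nat.cast_nonneg _)
  have hA1 : (1:ℝ) ≤ (a₁:ℝ) := by exact_mod_cast ha
  have hβ1 : (2*(a₁:ℝ)*(Real.exp M - 1) + 1)⁻¹ ≤ 1 := by
    rw [inv_le_one_iff₀]
    right
    have hE : 1 < Real.exp M := by
      rw [← Real.exp_zero]; exact Real.exp_lt_exp.2 hM
    nlinarith
  unfold u2r
  by_cases hb : t ≤ -(a₁:ℤ)
  · rw [if_pos hb]
    positivity
  · rw [if_neg hb]
    by_cases hc : (1:ℤ) ≤ t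
    · rw [if_pos hc]
    · rw [if_neg hc]
      have htR : -(a₁:ℝ) ≤ (t:ℝ) := by exact_mod_cast (by omega : -(a₁:ℤ) ≤ t)
      have htR0 : (t:ℝ) ≤ 0 := by exact_mod_cast (by omega : t ≤ (0:ℤ))
      have hβ0 : 0 ≤ (2*(a₁:ℝ)*(Real.exp M - 1) + 1)⁻¹ := by positivity
      have hapos : (0:ℝ) < (a₁:ℝ) := by linarith
      have hdiv : -1 ≤ (t:ℝ)/(a₁:ℝ) := by
        rw [le_div_iff₀ hapos]
        linarith
      rw [mul_div_assoc]
      nlinarith [mul_le_mul_of_nonneg_left hdiv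
        (by linarith : (0:ℝ) ≤ 1 - (2*(a₁:ℝ)*(Real.exp M - 1) + 1)⁻¹)]

/-- the crucial identity at the occupied site. -/
lemma key_identity (M A : ℝ) (hM : 0 < M) (hA : 1 ≤ A) :
    Real.exp (-M) * (((1 + (1 - (2*A*(Real.exp M - 1) + 1)⁻¹) * (-A+1)/A)
        + (2*A*(Real.exp M - 1) + 1)⁻¹) / 2)
      = (2*A*(Real.exp M - 1) + 1)⁻¹ := by
  have hD := beta_pos M A hM (by linarith)
  have hE : 0 < Real.exp M := Real.exp_pos M
  have hAne : A ≠ 0 := by linarith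
  rw [Real.exp_neg]
  field_simp
  ring

-- chunk 5c : the h-bound
lemma Hbound (M : ℝ) (hM : 0 < M) (a₁ : ℕ) (ha : 1 ≤ a₁) (V : ℤ → ℝ)
    (hval : ∀ z : ℤ, V z = 0 ∨ V z = M)
    (hvac : ∀ x : ℤ, -(a₁ : ℤ) < x → x ≤ 0 → V x = 0)
    (hocc : V (-(a₁ : ℤ)) = M) :
    HS V (· = 1) (-(a₁:ℤ)) 0 ≤ ENNReal.ofReal ((2*(a₁:ℝ)*(Real.exp M - 1) + 1)⁻¹) := by
  set β : ℝ := (2*(a₁:ℝ)*(Real.exp M - 1) + 1)⁻¹ with hβ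
  have hV : ∀ t, 0 ≤ V t := by
    intro t
    rcases hval t with h | h <;> rw [h]
    exact hM.le
  have hA1 : (1:ℝ) ≤ (a₁:ℝ) := by exact_mod_cast ha
  have hapos : (0:ℝ) < (a₁:ℝ) := by linarith
  have hd := beta_pos M (a₁:ℝ) hM (by linarith)
  have hβ0 : 0 ≤ β := by rw [hβ]; positivity
  have hnn := u2r_nonneg a₁ ha M hM
  -- the value at -a+1 via the formula
  have hval1 : u2r a₁ M (-(a₁:ℤ)+1) = 1 + (1 - β) * (-(a₁:ℝ)+1)/(a₁:ℝ) := by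
    rw [u2r_formula a₁ ha M hM _ (by omega) (by omega)]
    have : (((-(a₁:ℤ)+1 : ℤ)) : ℝ) = -(a₁:ℝ)+1 := by push_cast; ring
    rw [this]
  have hvalm : u2r a₁ M (-(a₁:ℤ)-1) = β := by
    unfold u2r; rw [if_pos (by omega)]
  have hvala : u2r a₁ M (-(a₁:ℤ)) = β := by
    unfold u2r; rw [if_pos (by omega)]
  have hcore : Real.exp (-M) * ((u2r a₁ M (-(a₁:ℤ)+1) + u2r a₁ M (-(a₁:ℤ)-1))/2) = β := by
    rw [hval1, hvalm, hβ]
    exact key_identity M (a₁:ℝ) hM hA1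
  have hur : ∀ y : ℤ, y ≠ 0 → ¬ (y = 1) →
      Real.exp (-V y) * ((u2r a₁ M (y+1) + u2r a₁ M (y-1))/2) ≤ u2r a₁ M y := by
    intro y hy0 hy1
    have hexp := exp_neg_le_one (hV y)
    have hexppos := Real.exp_pos (-V y)
    rcases lt_trichotomy y (-(a₁:ℤ)) with hc | hc | hc
    · -- y ≤ -a - 1
      have e1 : u2r a₁ M (y+1) = β := by unfold u2r; rw [if_pos (by omega)]
      have e2 : u2r a₁ M (y-1) = β := by unfold u2r; rw [if_pos (by omega)]
      have e3 : u2r a₁ M y = β := by unfold u2r; rw [if_pos (by omega)]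
      rw [e1, e2, e3]
      nlinarith
    · -- y = -a
      subst hc
      rw [hocc, hcore, hvala]
    · rcases lt_trichotomy y 0 with hd' | hd' | hd'
      · -- interior -a < y ≤ -1
        have hVy : V y = 0 := hvac y hc (by omega)
        have f0 : u2r a₁ M y = 1 + (1 - β) * (y:ℝ)/(a₁:ℝ) := by
          rw [u2r_formula a₁ ha M hM _ (by omega) (by omega), hβ]
        have f1 : u2r a₁ M (y+1) = 1 + (1 - β) * ((y:ℝ)+1)/(a₁:ℝ) := by
          rw [u2r_formula a₁ ha M hM _ (by omega) (by omega), hβ]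
          push_cast
          ring_nf
        have f2 : u2r a₁ M (y-1) = 1 + (1 - β) * ((y:ℝ)-1)/(a₁:ℝ) := by
          rw [u2r_formula a₁ ha M hM _ (by omega) (by omega), hβ]
          push_cast
          ring_nf
        rw [hVy, f0, f1, f2, neg_zero, Real.exp_zero, one_mul]
        apply le_of_eq
        field_simp
        ring
      · exact absurd hd' hy0
      · -- y ≥ 2
        have e1 : u2r a₁ M (y+1) = 0 := by
          unfold u2r; rw [if_neg (by omega), if_pos (by omega)]
        have e2 : u2r a₁ M (y-1) = 0 := by
          unfold u2r; rw [if_neg (by omega), if_pos (by omega)]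
        have e3 : u2r a₁ M y = 0 := by
          unfold u2r; rw [if_neg (by omega), if_pos (by omega)]
        rw [e1, e2, e3]
        norm_num
  have huz : 1 ≤ u2r a₁ M 0 := by
    rw [u2r_formula a₁ ha M hM 0 (by omega) le_rfl]
    norm_num
  have h := HS_le_real V (· = 1) (-(a₁:ℤ)) 0 (u2r a₁ M) hnn huz hur (by omega)
  refine le_trans h (le_of_eq ?_)
  congr 1
  rw [hocc, hcore]

-- chunk 6 : conversion to real sums
lemma ind_nonneg (P : Prop) : 0 ≤ ind P := by
  by_cases h : P <;> simp [ind, h]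

lemma ind_and' (P Q : Prop) : ind (P ∧ Q) = ind P * ind Q := by
  by_cases hp : P <;> by_cases hq : Q <;> simp [ind, hp, hq]

lemma ind_true' {P : Prop} (h : P) : ind P = 1 := by simp [ind, h]

lemma conv (V : ℤ → ℝ) (x z : ℤ) (E : (n : ℕ) → (Fin n → Bool) → Prop) :
    hitSum x z (fun n s => ind (E n s) * wt V x s)
      = (∑' p : (Σ n : ℕ, Fin n → Bool),
          (2:ℝ≥0∞)⁻¹^p.1 * (iE (FP x z p.2 ∧ E p.1 p.2) * w V x p.2)).toReal := by
  classical
  set g : ℕ → ℝ≥0∞ :=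
    fun n => (2:ℝ≥0∞)⁻¹^n * ∑ s : Fin n → Bool, iE (FP x z s ∧ E n s) * w V x s with hg
  have hsig : (∑' p : (Σ n : ℕ, Fin n → Bool),
      (2:ℝ≥0∞)⁻¹^p.1 * (iE (FP x z p.2 ∧ E p.1 p.2) * w V x p.2)) = ∑' n, g n := by
    rw [ENNReal.tsum_sigma (fun n s => (2:ℝ≥0∞)⁻¹^n * (iE (FP x z s ∧ E n s) * w V x s))]
    apply tsum_congr
    intro n
    rw [tsum_fintype, ← Finset.mul_sum]
  have hgtop : ∀ n, g n ≠ ⊤ := by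
    intro n
    rw [hg]
    apply ENNReal.mul_ne_top
    · exact ENNReal.pow_ne_top (ENNReal.inv_ne_top.2 (by norm_num))
    · refine (ENNReal.sum_lt_top.2 ?_).ne
      intro s _
      exact (ENNReal.mul_ne_top (iE_ne_top _) (w_ne_top V x s)).lt_top
  have htr : ∀ n, (g n).toReal
      = (2:ℝ)⁻¹^n * ∑ s : Fin n → Bool, ind (FP x z s ∧ E n s) * wt V x s := by
    intro n
    rw [hg, ENNReal.toReal_mul]
    congr 1
    · rw [ENNReal.toReal_pow, ENNReal.toReal_inv]
      norm_num
    · rw [ENNReal.toReal_sum (fun s _ => ENNReal.mul_ne_top (iE_ne_top _) (w_ne_top V x s))]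
      apply Finset.sum_congr rfl
      intro s _
      rw [ENNReal.toReal_mul, toReal_iE, w, ENNReal.toReal_ofReal (wt_nonneg V x s)]
  have hterm : ∀ (n : ℕ) (s : Fin n → Bool),
      ind (0 < n ∧ walkPos x s n = z ∧ ∀ k, 0 < k → k < n → walkPos x s k ≠ z)
        * (ind (E n s) * wt V x s) = ind (FP x z s ∧ E n s) * wt V x s := by
    intro n s
    have h1 : ind (0 < n ∧ walkPos x s n = z ∧ ∀ k, 0 < k → k < n → walkPos x s k ≠ z)
        = ind (FP x z s) := rfl
    rw [h1, ← mul_assoc, ← ind_and']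
  rw [hitSum]
  have : (fun n => (2:ℝ)⁻¹ ^ n * ∑ s : Fin n → Bool,
      ind (0 < n ∧ walkPos x s n = z ∧ ∀ k, 0 < k → k < n → walkPos x s k ≠ z)
        * (ind (E n s) * wt V x s)) = fun n => (g n).toReal := by
    funext n
    rw [htr]
    congr 1
    exact Finset.sum_congr rfl (fun s _ => hterm n s)
  rw [this, ← ENNReal.tsum_toReal_eq hgtop, hsig]

lemma hitSum_congr (x z : ℤ) (φ ψ : (n : ℕ) → (Fin n → Bool) → ℝ)
    (h : ∀ n s, φ n s = ψ n s) : hitSum x z φ = hitSum x z ψ := by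
  rw [hitSum, hitSum]
  apply tsum_congr
  intro n
  congr 1
  exact Finset.sum_congr rfl (fun s _ => by rw [h])

lemma convD (V : ℤ → ℝ) (x z : ℤ) :
    hitSum x z (fun _ s => wt V x s) = (HS V (fun _ => False) x z).toReal := by
  have h1 : hitSum x z (fun _ s => wt V x s)
      = hitSum x z (fun n s => ind (AV (fun _ => False) x s) * wt V x s) := by
    apply hitSum_congr
    intro n s
    rw [ind_true' (show AV (fun _ => False) x s from fun k hk => not_false), one_mul]
  rw [h1, conv V x z (fun n s => AV (fun _ => False) x s)]
  rfl

end BTP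

open BTP ENNReal in
/-- Lemma 2.4. For a `{0,M}`-valued potential with first occupied
site `−a₁` in `(−∞,0]`,
`P^V(τ₁ > τ_{−a₁} | τ₁ < ∞) ≤ min{e^{−M}, ((2a₁(e^M−1)+1)(1+a₁))⁻¹}`. -/
theorem backtrack_probability_bound (M : ℝ) (hM : 0 < M) (a₁ : ℕ) (V : ℤ → ℝ)
    (hval : ∀ z : ℤ, V z = 0 ∨ V z = M)
    (hvac : ∀ x : ℤ, -(a₁ : ℤ) < x → x ≤ 0 → V x = 0)
    (hocc : V (-(a₁ : ℤ)) = M) :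
    (hitSum 0 1 fun n s =>
        ind (∃ k, 0 < k ∧ k < n ∧ walkPos 0 s k = -(a₁ : ℤ)) * wt V 0 s) /
      (hitSum 0 1 fun _ s => wt V 0 s)
      ≤ min (Real.exp (-M)) ((2 * (a₁ : ℝ) * (Real.exp M - 1) + 1) * (1 + (a₁ : ℝ)))⁻¹ := by
  classical
  have hV : ∀ t, 0 ≤ V t := by
    intro t
    rcases hval t with h | h <;> rw [h]
    exact hM.le
  have hexpM1 : Real.exp (-M) ≤ 1 := exp_neg_le_one hM.le
  set c : ℝ := min (Real.exp (-M)) ((2 * (a₁:ℝ) * (Real.exp M - 1) + 1) * (1 + (a₁:ℝ)))⁻¹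
    with hc
  have hbp := beta_pos M (a₁:ℝ) hM (Nat.cast_nonneg _)
  have hc0 : 0 ≤ c := by
    rw [hc]
    apply le_min (Real.exp_pos _).le
    apply inv_nonneg.2
    apply mul_nonneg hbp.le
    positivity
  set Nt : ℝ≥0∞ := (∑' p : (Σ n : ℕ, Fin n → Bool),
      (2:ℝ≥0∞)⁻¹^p.1 * (iE (FP 0 1 p.2 ∧
        (∃ k, 0 < k ∧ k < p.1 ∧ walkPos 0 p.2 k = -(a₁:ℤ))) * w V 0 p.2)) with hNt
  set Dt : ℝ≥0∞ := HS V (fun _ => False) 0 1 with hDt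
  have hNr : (hitSum 0 1 fun n s =>
      ind (∃ k, 0 < k ∧ k < n ∧ walkPos 0 s k = -(a₁ : ℤ)) * wt V 0 s) = Nt.toReal :=
    conv V 0 1 (fun n s => ∃ k, 0 < k ∧ k < n ∧ walkPos 0 s k = -(a₁:ℤ))
  have hDr : (hitSum 0 1 fun _ s => wt V 0 s) = Dt.toReal := convD V 0 1
  have hsplit1 : Nt = HS V (· = 1) 0 (-(a₁:ℤ)) * HS V (fun _ => False) (-(a₁:ℤ)) 1 :=
    SPLIT V 0 (-(a₁:ℤ)) 1 (by norm_num) (by omega) _ (fun n s _ => Iff.rfl)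
  have hF1 : HS V (· = 1) 0 (-(a₁:ℤ)) ≤ 1 :=
    HS_le_one V hV _ 0 _ (by norm_num)
  have hG1 : HS V (fun _ => False) (-(a₁:ℤ)) 1 ≤ 1 :=
    HS_le_one V hV _ _ 1 not_false
  have hD1 : Dt ≤ 1 := HS_le_one V hV _ 0 1 not_false
  have hDtop : Dt ≠ ⊤ := (lt_of_le_of_lt hD1 ENNReal.one_lt_top).ne
  have hNtop : Nt ≠ ⊤ := by
    rw [hsplit1]
    exact ENNReal.mul_ne_top (lt_of_le_of_lt hF1 ENNReal.one_lt_top).ne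
      (lt_of_le_of_lt hG1 ENNReal.one_lt_top).ne
  -- main inequality
  have hkey : Nt ≤ ENNReal.ofReal c * Dt := by
    rcases Nat.eq_zero_or_pos a₁ with ha | ha
    · -- a₁ = 0
      have hy0 : -(a₁:ℤ) = 0 := by rw [ha]; norm_num
      have haR : (a₁:ℝ) = 0 := by rw [ha]; norm_num
      have hoc0 : V 0 = M := by rw [← hy0]; exact hocc
      have hF : HS V (· = 1) 0 0 ≤ ENNReal.ofReal (Real.exp (-M)) := by
        refine le_trans (HS_le_exp V hV (· = 1) 0 0 (by norm_num)) (le_of_eq ?_)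
        rw [hoc0]
      have hmin : c = Real.exp (-M) := by
        rw [hc, haR]
        norm_num
        linarith
      rw [hsplit1, hmin, hDt, hy0]
      exact mul_le_mul' hF le_rfl
    · -- a₁ ≥ 1
      have hy1 : -(a₁:ℤ) ≠ 1 := by omega
      have hy0' : -(a₁:ℤ) ≠ 0 := by omega
      have hcross : ∀ (n : ℕ) (s : Fin n → Bool), FP (-(a₁:ℤ)) 1 s →
          ∃ k, 0 < k ∧ k < n ∧ walkPos (-(a₁:ℤ)) s k = 0 := by
        intro n s hfp
        obtain ⟨k, hk, hk0⟩ := walk_ivt (-(a₁:ℤ)) s 0 (by omega) n (by rw [hfp.2.1]; norm_num)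
        have hkne : 0 < k := by
          rcases Nat.eq_zero_or_pos k with h | h
          · exfalso
            subst h
            rw [walkPos_zero] at hk0
            omega
          · exact h
        have hkn : k < n := by
          rcases lt_or_eq_of_le hk with h | h
          · exact h
          · exfalso
            subst h
            rw [hfp.2.1] at hk0
            omega
        exact ⟨k, hkne, hkn, hk0⟩
      have hsplit2 : HS V (fun _ => False) (-(a₁:ℤ)) 1
          = HS V (· = 1) (-(a₁:ℤ)) 0 * HS V (fun _ => False) 0 1 := by
        have h1 : HS V (fun _ => False) (-(a₁:ℤ)) 1
            = ∑' p : (Σ n : ℕ, Fin n → Bool), (2:ℝ≥0∞)⁻¹^p.1 *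
              (iE (FP (-(a₁:ℤ)) 1 p.2 ∧
                (∃ k, 0 < k ∧ k < p.1 ∧ walkPos (-(a₁:ℤ)) p.2 k = 0)) * w V (-(a₁:ℤ)) p.2) := by
          rw [HS]
          apply tsum_congr
          intro p
          congr 1
          congr 1
          apply iE_of_iff
          constructor
          · rintro ⟨h1, -⟩
            exact ⟨h1, hcross _ _ h1⟩
          · rintro ⟨h1, -⟩
            exact ⟨h1, fun k hk => not_false⟩
        rw [h1]
        exact SPLIT V (-(a₁:ℤ)) 0 1 hy1 (by norm_num) _ (fun n s _ => Iff.rfl)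
      have B2 := Fbound M hM a₁ ha V hval hvac
      have B4 := Hbound M hM a₁ ha V hval hvac hocc
      have B3 : HS V (· = 1) (-(a₁:ℤ)) 0 ≤ ENNReal.ofReal (Real.exp (-M)) := by
        refine le_trans (HS_le_exp V hV (· = 1) (-(a₁:ℤ)) 0 hy1) (le_of_eq ?_)
        rw [hocc]
      have hA0 : (0:ℝ) < 1 + (a₁:ℝ) := by positivity
      rw [hsplit1, hsplit2, ← mul_assoc]
      rcases le_total (Real.exp (-M)) (((2 * (a₁:ℝ) * (Real.exp M - 1) + 1) * (1 + (a₁:ℝ)))⁻¹)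
        with h | h
      · have hmin : c = Real.exp (-M) := by rw [hc]; exact min_eq_left h
        rw [hmin, hDt]
        refine mul_le_mul' ?_ le_rfl
        refine le_trans (mul_le_mul' hF1 B3) (le_of_eq ?_)
        rw [one_mul]
      · have hmin : c = ((2 * (a₁:ℝ) * (Real.exp M - 1) + 1) * (1 + (a₁:ℝ)))⁻¹ := by
          rw [hc]; exact min_eq_right h
        have harith : ((2 * (a₁:ℝ) * (Real.exp M - 1) + 1) * (1 + (a₁:ℝ)))⁻¹
            = (1/(1 + (a₁:ℝ))) * (2 * (a₁:ℝ) * (Real.exp M - 1) + 1)⁻¹ := by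
          rw [mul_inv]
          ring
        rw [hmin, harith, hDt]
        refine mul_le_mul' ?_ le_rfl
        refine le_trans (mul_le_mul' B2 B4) (le_of_eq ?_)
        rw [← ENNReal.ofReal_mul (by positivity)]
  -- conclude
  have hineq : Nt.toReal ≤ c * Dt.toReal := by
    have h2 : Nt.toReal ≤ (ENNReal.ofReal c * Dt).toReal :=
      ENNReal.toReal_mono (ENNReal.mul_ne_top ENNReal.ofReal_ne_top hDtop) hkey
    rwa [ENNReal.toReal_mul, ENNReal.toReal_ofReal hc0] at h2
  rw [hNr, hDr]
  by_cases hD0 : Dt.toReal = 0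
  · rw [hD0, _root_.div_zero]
    exact hc0
  · have hD0' : 0 < Dt.toReal := lt_of_le_of_ne ENNReal.toReal_nonneg (Ne.symm hD0)
    rw [div_le_iff₀ hD0']
    exact hineq

end
end
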